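/- arXiv:1702.08216 — 3 statements merged into one kernel-verified Lean document; each statement's English description precedes it below -/
import Mathlib

section
/- (i) For each j with 1 ≤ j ≤ n−m, the coefficient of a_jⁿ in D̃_m (i.e. the leading coefficient of D̃_m written as a polynomial in a_j with coefficients in the ring of the remaining variables) equals ε · b_jⁿ · (1 − b₀/b_j)^j · aₙ^{n−m−j} for some sign ε ∈ {1, −1}. (ii) For each s with 1 ≤ s ≤ m−1, the coefficient of a_{n−m+s}^{n−m} in D̃_m equals ε · b_{n−m}^{m−s} · b₀^{n−m+s} · a_{n−m}^{m−s} for some sign ε ∈ {1, −1}. -/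
open Polynomial

/-- Sylvester-style matrix of `f` (formal degree `df`) and `g` (formal degree `dg`):
rows `0,…,dg-1` carry shifted coefficients of `f`, rows `dg,…,dg+df-1` those of `g`. -/
noncomputable def sylv {R : Type*} [CommRing R] (f g : R[X]) (df dg : ℕ) :
    Matrix (Fin (dg + df)) (Fin (dg + df)) R :=
  Matrix.of fun i j =>
    if (i : ℕ) < dg then
      (if (i : ℕ) ≤ (j : ℕ) ∧ (j : ℕ) ≤ (i : ℕ) + df then f.coeff (df + (i : ℕ) - (j : ℕ)) else 0)
    else
      (if (i : ℕ) - dg ≤ (j : ℕ) ∧ (j : ℕ) ≤ (i : ℕ) then g.coeff ((i : ℕ) - (j : ℕ)) else 0)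

/-- The resultant of `f` and `g`, taken with formal degrees `df` and `dg`. -/
noncomputable def res {R : Type*} [CommRing R] (f g : R[X]) (df dg : ℕ) : R :=
  (sylv f g df dg).det

/-- `P = xⁿ + a₁ x^{n-1} + ⋯ + aₙ`, where `a_j` is the variable `X ⟨j-1,_⟩`. -/
noncomputable def Pgen (n : ℕ) : Polynomial (MvPolynomial (Fin n) ℂ) :=
  Polynomial.X ^ n +
    ∑ i : Fin n, Polynomial.C (MvPolynomial.X i) * Polynomial.X ^ (n - 1 - (i : ℕ))

/-- `P_* = Σ_{j=0}^{n-m} b_j a_j x^{n-m-j}` with `a₀ = 1`. -/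
noncomputable def Pstar (n m : ℕ) (b : ℕ → ℂ) : Polynomial (MvPolynomial (Fin n) ℂ) :=
  Polynomial.C (MvPolynomial.C (b 0)) * Polynomial.X ^ (n - m) +
    ∑ i : Fin n, if (i : ℕ) < n - m then
      Polynomial.C (MvPolynomial.C (b ((i : ℕ) + 1)) * MvPolynomial.X i) *
        Polynomial.X ^ (n - m - 1 - (i : ℕ))
    else 0

/-- `D̃_m = Res(P, P_*)`. -/
noncomputable def Dtilde (n m : ℕ) (b : ℕ → ℂ) : MvPolynomial (Fin n) ℂ :=
  res (Pgen n) (Pstar n m b) n (n - m)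

/-- View a polynomial in `a₁,…,aₙ` as a univariate polynomial in the variable `a_k`,
with coefficients in the polynomial ring in the remaining variables. -/
noncomputable def polyInK {n : ℕ} (k : Fin n) (q : MvPolynomial (Fin n) ℂ) :
    Polynomial (MvPolynomial {j : Fin n // j ≠ k} ℂ) :=
  MvPolynomial.optionEquivLeft ℂ {j : Fin n // j ≠ k}
    (MvPolynomial.rename (Equiv.optionSubtypeNe k).symm q)

/-- `D̃_{m,k} = Res(D̃_m, ∂D̃_m/∂a_k, a_k)`, where `D̃_m` is taken with degree `d` in `a_k`
(and its partial derivative with degree `d - 1`). -/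
noncomputable def DtildeK (n m : ℕ) (b : ℕ → ℂ) (k : Fin n) (d : ℕ) :
    MvPolynomial {j : Fin n // j ≠ k} ℂ :=
  res (polyInK k (Dtilde n m b)) (Polynomial.derivative (polyInK k (Dtilde n m b))) d (d - 1)

/-- The canonical restriction `ℂ[a₁,…,aₙ] → ℂ[a^k]` sending `a_k ↦ 0` and fixing the
other variables (it is faithful on polynomials not involving `a_k`). -/
noncomputable def toSub {n : ℕ} (k : Fin n) :
    MvPolynomial (Fin n) ℂ →ₐ[ℂ] MvPolynomial {j : Fin n // j ≠ k} ℂ :=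
  MvPolynomial.aeval (fun j => if h : j = k then 0 else MvPolynomial.X ⟨j, h⟩)

/-- The canonical restriction `ℂ[a₁,…,aₙ] → ℂ[a₁,…,a_{n-m}]` sending `a_j ↦ 0` for
`j > n - m` and fixing the other variables. -/
noncomputable def toLow (n m : ℕ) : MvPolynomial (Fin n) ℂ →ₐ[ℂ] MvPolynomial (Fin (n - m)) ℂ :=
  MvPolynomial.aeval (fun j : Fin n =>
    if h : (j : ℕ) < n - m then MvPolynomial.X ⟨(j : ℕ), h⟩ else 0)

/-- `P_{m,k} = b_k·P − x^m·P_*`. -/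
noncomputable def Pmk (n m : ℕ) (b : ℕ → ℂ) (k : ℕ) : Polynomial (MvPolynomial (Fin n) ℂ) :=
  Polynomial.C (MvPolynomial.C (b k)) * Pgen n - Polynomial.X ^ m * Pstar n m b

/-- The evaluation of `P` at a parameter point `a ∈ ℂⁿ`. -/
noncomputable def Pev (n : ℕ) (a : Fin n → ℂ) : Polynomial ℂ :=
  (Pgen n).map (MvPolynomial.eval a)

/-- The evaluation of `P_*` at a parameter point `a ∈ ℂⁿ`. -/
noncomputable def Psev (n m : ℕ) (b : ℕ → ℂ) (a : Fin n → ℂ) : Polynomial ℂ :=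
  (Pstar n m b).map (MvPolynomial.eval a)

/-- The Maxwell stratum: `P(·,a)` and `P_*(·,a)` have exactly two common roots, both
simple roots of each, and all remaining roots of `P` and of `P_*` are simple (hence
mutually distinct, there being no further common roots). -/
def Maxwell (n m : ℕ) (b : ℕ → ℂ) : Set (Fin n → ℂ) :=
  {a | ∃ z₁ z₂ : ℂ, z₁ ≠ z₂ ∧
    (∀ z : ℂ, ((Pev n a).IsRoot z ∧ (Psev n m b a).IsRoot z) ↔ (z = z₁ ∨ z = z₂)) ∧
    (∀ z : ℂ, (Pev n a).IsRoot z → (Pev n a).rootMultiplicity z = 1) ∧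
    (∀ z : ℂ, (Psev n m b a).IsRoot z → (Psev n m b a).rootMultiplicity z = 1)}

/-- The set `Θ`: `P(·,a)` has a (simple) root which is a double root of `P_*(·,a)`,
all the remaining roots of `P` and of `P_*` are simple, and `P` and `P_*` have no
further common roots. -/
def Theta (n m : ℕ) (b : ℕ → ℂ) : Set (Fin n → ℂ) :=
  {a | ∃ z : ℂ, (Pev n a).IsRoot z ∧ (Psev n m b a).rootMultiplicity z = 2 ∧
    (Pev n a).rootMultiplicity z = 1 ∧
    (∀ w : ℂ, w ≠ z → (Pev n a).IsRoot w → (Pev n a).rootMultiplicity w = 1) ∧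
    (∀ w : ℂ, w ≠ z → (Psev n m b a).IsRoot w → (Psev n m b a).rootMultiplicity w = 1) ∧
    (∀ w : ℂ, w ≠ z → ¬((Pev n a).IsRoot w ∧ (Psev n m b a).IsRoot w))}

/-- The projection `ℂⁿ → ℂ^{n-1}` forgetting the coordinate `a_k`. -/
def projK {n : ℕ} (k : Fin n) (a : Fin n → ℂ) : {j : Fin n // j ≠ k} → ℂ :=
  fun j => a j.1


lemma det_eq_pm_prod {R : Type*} [CommRing R] {N : ℕ} (M : Matrix (Fin N) (Fin N) R)
    (f g : Fin N → Fin N) (hf : Function.Injective f) (hg : Function.Injective g)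
    (h0 : ∀ p q : Fin N, q < p → M (f p) (g q) = 0) :
    ∃ ε : R, (ε = 1 ∨ ε = -1) ∧ M.det = ε * ∏ p, M (f p) (g p) := by
  classical
  let σ : Equiv.Perm (Fin N) := Equiv.ofBijective f ((Finite.injective_iff_bijective).mp hf)
  let τ : Equiv.Perm (Fin N) := Equiv.ofBijective g ((Finite.injective_iff_bijective).mp hg)
  have hσ : ∀ p, σ p = f p := fun p => rfl
  have hτ : ∀ p, τ p = g p := fun p => rfl
  have htri : (M.submatrix σ τ).det = ∏ p, M (f p) (g p) := by
    rw [Matrix.det_of_upperTriangular]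
    · exact Finset.prod_congr rfl (fun p _ => by simp [Matrix.submatrix_apply, hσ, hτ])
    · intro i j hij
      simpa [Matrix.submatrix_apply, hσ, hτ] using h0 i j hij
  have hperm : (M.submatrix σ τ).det = (Equiv.Perm.sign τ : ℤ) * ((Equiv.Perm.sign σ : ℤ) * M.det) := by
    have h1 : M.submatrix σ τ = (M.submatrix σ id).submatrix id τ := rfl
    rw [h1, Matrix.det_permute', Matrix.det_permute]
  set u : ℤˣ := Equiv.Perm.sign τ * Equiv.Perm.sign σ with hu
  have hval : ((u : ℤ) : R) * M.det = ∏ p, M (f p) (g p) := by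
    rw [← htri, hperm, hu]
    push_cast
    ring
  rcases Int.units_eq_one_or u with h | h
  · refine ⟨1, Or.inl rfl, ?_⟩
    rw [h] at hval
    push_cast at hval
    rw [one_mul]
    linear_combination hval
  · refine ⟨-1, Or.inr rfl, ?_⟩
    rw [h] at hval
    push_cast at hval
    linear_combination -hval

lemma coeff_det_linear {R : Type*} [CommRing R] {N : ℕ} (A B : Matrix (Fin N) (Fin N) R)
    (S0 : Finset (Fin N)) (r : ℕ) (hcard : S0.card = r)
    (hB : ∀ i, i ∉ S0 → ∀ j, B i j = 0) :
    (Matrix.det (Matrix.of fun i j => Polynomial.C (A i j) + Polynomial.X * Polynomial.C (B i j))).coeff r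
      = Matrix.det (Matrix.of fun i j => if i ∈ S0 then B i j else A i j) := by
  classical
  set Arow : Fin N → Fin N → R[X] := fun i => fun j => Polynomial.C (A i j) with hArow
  set Brow : Fin N → Fin N → R[X] := fun i => fun j => Polynomial.C (B i j) with hBrow
  have hdet : (Matrix.det (Matrix.of fun i j => Polynomial.C (A i j) + Polynomial.X * Polynomial.C (B i j)))
      = ∑ s : Finset (Fin N), Polynomial.X ^ s.card *
          Polynomial.C (Matrix.det (Matrix.of fun i j => if i ∈ s then B i j else A i j)) := by
    have key : Matrix.detRowAlternating ((fun i => (Polynomial.X : R[X]) • Brow i) + Arow)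
        = ∑ s : Finset (Fin N),
            Matrix.detRowAlternating (s.piecewise (fun i => (Polynomial.X : R[X]) • Brow i) Arow) :=
      (Matrix.detRowAlternating (R := R[X]) (n := Fin N)).toMultilinearMap.map_add_univ
        (fun i => ((Polynomial.X : R[X]) • Brow i)) Arow
    have hM : (Matrix.of fun i j => Polynomial.C (A i j) + Polynomial.X * Polynomial.C (B i j)) =
        ((fun i => ((Polynomial.X : R[X]) • Brow i)) + Arow : Fin N → Fin N → R[X]) := by
      funext i j
      show Polynomial.C (A i j) + Polynomial.X * Polynomial.C (B i j)
          = ((Polynomial.X : R[X]) • Brow i) j + Arow i j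
      simp [hArow, hBrow, smul_eq_mul, add_comm]
    have hstart : (Matrix.det (Matrix.of fun i j => Polynomial.C (A i j) + Polynomial.X * Polynomial.C (B i j)))
        = Matrix.detRowAlternating ((fun i => (Polynomial.X : R[X]) • Brow i) + Arow) := by
      rw [← hM]; rfl
    rw [hstart, key]
    refine Finset.sum_congr rfl (fun s _ => ?_)
    have hpiece : s.piecewise (fun i => ((Polynomial.X : R[X]) • Brow i)) Arow
        = s.piecewise (fun i => (fun _ : Fin N => (Polynomial.X : R[X])) i • (s.piecewise Brow Arow i))
            (s.piecewise Brow Arow) := by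
      funext i
      by_cases hi : i ∈ s <;> simp [Finset.piecewise, hi]
    have hsmul : Matrix.detRowAlternating (s.piecewise (fun i => ((Polynomial.X : R[X]) • Brow i)) Arow)
        = (∏ _i ∈ s, (Polynomial.X : R[X])) • Matrix.detRowAlternating (s.piecewise Brow Arow) := by
      rw [hpiece]
      exact (Matrix.detRowAlternating (R := R[X]) (n := Fin N)).toMultilinearMap.map_piecewise_smul
        (fun _ : Fin N => (Polynomial.X : R[X])) (s.piecewise Brow Arow) s
    have hbase : s.piecewise Brow Arow
        = ((Matrix.of fun i j => if i ∈ s then B i j else A i j).map Polynomial.C : Matrix (Fin N) (Fin N) R[X]) := by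
      funext i j
      by_cases hi : i ∈ s <;> simp [Finset.piecewise, hi, hArow, hBrow, Matrix.map_apply]
    have hdetbase : (Matrix.detRowAlternating (s.piecewise Brow Arow) : R[X])
        = Polynomial.C (Matrix.det (Matrix.of fun i j => if i ∈ s then B i j else A i j)) := by
      rw [show (Matrix.detRowAlternating (s.piecewise Brow Arow) : R[X])
          = Matrix.det (s.piecewise Brow Arow) from rfl, hbase]
      exact ((Polynomial.C : R →+* R[X]).map_det _).symm
    rw [hsmul, hdetbase, Finset.prod_const, smul_eq_mul]
  rw [hdet, Polynomial.finset_sum_coeff]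
  have hterm : ∀ s : Finset (Fin N),
      (Polynomial.X ^ s.card * Polynomial.C (Matrix.det (Matrix.of fun i j => if i ∈ s then B i j else A i j))).coeff r
      = if s.card = r then Matrix.det (Matrix.of fun i j => if i ∈ s then B i j else A i j) else 0 := by
    intro s
    rw [mul_comm, Polynomial.C_mul_X_pow_eq_monomial, Polynomial.coeff_monomial]
  rw [Finset.sum_congr rfl (fun s _ => hterm s)]
  rw [Finset.sum_eq_single_of_mem S0 (Finset.mem_univ _)]
  · rw [if_pos hcard]
  · intro s _ hs
    by_cases hc : s.card = r
    · rw [if_pos hc]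
      have : ¬ s ⊆ S0 := by
        intro hsub
        exact hs (Finset.eq_of_subset_of_card_le hsub (by omega))
      obtain ⟨i, his, hiS0⟩ := Finset.not_subset.mp this
      apply Matrix.det_eq_zero_of_row_eq_zero i
      intro j
      simp [his, hB i hiS0 j]
    · rw [if_neg hc]

lemma card_filter_lt_fin (N v : ℕ) (h : v ≤ N) :
    ((Finset.univ : Finset (Fin N)).filter (fun i : Fin N => (i : ℕ) < v)).card = v := by
  rw [Finset.card_filter]
  rw [Fin.sum_univ_eq_sum_range (fun i => if i < v then 1 else 0) N]
  rw [Finset.range_eq_Ico, ← Finset.sum_Ico_consecutive _ (Nat.zero_le v) h]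
  have e1 : ∀ p ∈ Finset.Ico 0 v, (if p < v then (1:ℕ) else 0) = 1 := by
    intro p hp; rw [Finset.mem_Ico] at hp; rw [if_pos hp.2]
  have e2 : ∀ p ∈ Finset.Ico v N, (if p < v then (1:ℕ) else 0) = 0 := by
    intro p hp; rw [Finset.mem_Ico] at hp; rw [if_neg (by omega)]
  rw [Finset.sum_congr rfl e1, Finset.sum_congr rfl e2]
  simp

lemma prod_fin_three {M : Type*} [CommMonoid M] {N : ℕ} (a b : ℕ) (hab : a ≤ b) (hbN : b ≤ N)
    (u v w : M) :
    (∏ p : Fin N, (if (p : ℕ) < a then u else if (p : ℕ) < b then v else w))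
      = u ^ a * (v ^ (b - a) * w ^ (N - b)) := by
  rw [Fin.prod_univ_eq_prod_range (fun p => if p < a then u else if p < b then v else w) N]
  rw [Finset.range_eq_Ico, ← Finset.prod_Ico_consecutive _ (Nat.zero_le a) (le_trans hab hbN),
    ← Finset.prod_Ico_consecutive _ hab hbN]
  have e1 : ∀ p ∈ Finset.Ico 0 a, (if p < a then u else if p < b then v else w) = u := by
    intro p hp; rw [Finset.mem_Ico] at hp; rw [if_pos hp.2]
  have e2 : ∀ p ∈ Finset.Ico a b, (if p < a then u else if p < b then v else w) = v := by
    intro p hp; rw [Finset.mem_Ico] at hp; rw [if_neg (by omega), if_pos hp.2]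
  have e3 : ∀ p ∈ Finset.Ico b N, (if p < a then u else if p < b then v else w) = w := by
    intro p hp; rw [Finset.mem_Ico] at hp; rw [if_neg (by omega), if_neg (by omega)]
  rw [Finset.prod_congr rfl e1, Finset.prod_congr rfl e2, Finset.prod_congr rfl e3]
  rw [Finset.prod_const, Finset.prod_const, Finset.prod_const, Nat.card_Ico, Nat.card_Ico,
    Nat.card_Ico, Nat.sub_zero]

-- ψ as an AlgHom
noncomputable def psiK {n : ℕ} (k : Fin n) :
    MvPolynomial (Fin n) ℂ →ₐ[ℂ] Polynomial (MvPolynomial {j : Fin n // j ≠ k} ℂ) :=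
  ((MvPolynomial.optionEquivLeft ℂ {j : Fin n // j ≠ k}).toAlgHom.comp
    (MvPolynomial.rename (Equiv.optionSubtypeNe k).symm))

lemma polyInK_eq_psiK {n : ℕ} (k : Fin n) (q : MvPolynomial (Fin n) ℂ) :
    polyInK k q = psiK k q := rfl

lemma psiK_C {n : ℕ} (k : Fin n) (c : ℂ) :
    psiK k (MvPolynomial.C c) = Polynomial.C (MvPolynomial.C c) := by
  simp [psiK, MvPolynomial.optionEquivLeft_C]

lemma psiK_X_self {n : ℕ} (k : Fin n) :
    psiK k (MvPolynomial.X k) = Polynomial.X := by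
  simp [psiK, Equiv.optionSubtypeNe_symm_self, MvPolynomial.optionEquivLeft_X_none]

lemma psiK_X_ne {n : ℕ} (k i : Fin n) (h : i ≠ k) :
    psiK k (MvPolynomial.X i) = Polynomial.C (MvPolynomial.X ⟨i, h⟩) := by
  simp [psiK, Equiv.optionSubtypeNe_symm_of_ne h, MvPolynomial.optionEquivLeft_X_some]

lemma psiK_one {n : ℕ} (k : Fin n) : psiK k (1 : MvPolynomial (Fin n) ℂ) = 1 := map_one _

-- coefficients of Pgen
lemma Pgen_coeff_top (n : ℕ) (hn : 1 ≤ n) : (Pgen n).coeff n = 1 := by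
  rw [Pgen, Polynomial.coeff_add, Polynomial.coeff_X_pow, if_pos rfl,
    Polynomial.finset_sum_coeff]
  have : ∀ i ∈ (Finset.univ : Finset (Fin n)),
      ((Polynomial.C (MvPolynomial.X i) * Polynomial.X ^ (n - 1 - (i : ℕ)) :
        Polynomial (MvPolynomial (Fin n) ℂ))).coeff n = 0 := by
    intro i _
    rw [Polynomial.coeff_C_mul, Polynomial.coeff_X_pow, if_neg (by omega), mul_zero]
  rw [Finset.sum_congr rfl this]
  simp

lemma Pgen_coeff_lt (n t : ℕ) (h : t < n) :
    (Pgen n).coeff t = MvPolynomial.X (⟨n - 1 - t, by omega⟩ : Fin n) := by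
  rw [Pgen, Polynomial.coeff_add, Polynomial.coeff_X_pow, if_neg (by omega),
    Polynomial.finset_sum_coeff, zero_add]
  rw [Finset.sum_eq_single_of_mem (⟨n - 1 - t, by omega⟩ : Fin n) (Finset.mem_univ _)]
  · rw [Polynomial.coeff_C_mul, Polynomial.coeff_X_pow, if_pos (by simp; omega), mul_one]
  · intro i _ hi
    rw [Polynomial.coeff_C_mul, Polynomial.coeff_X_pow, if_neg, mul_zero]
    intro hc
    apply hi
    have := i.isLt
    apply Fin.ext
    simp only []
    omega

lemma Pgen_coeff_gt (n t : ℕ) (h : n < t) : (Pgen n).coeff t = 0 := by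
  rw [Pgen, Polynomial.coeff_add, Polynomial.coeff_X_pow, if_neg (by omega),
    Polynomial.finset_sum_coeff, zero_add]
  rw [Finset.sum_eq_zero]
  intro i _
  rw [Polynomial.coeff_C_mul, Polynomial.coeff_X_pow, if_neg (by omega), mul_zero]

-- coefficients of Pstar
lemma Pstar_coeff_top (n m : ℕ) (b : ℕ → ℂ) (h : 1 ≤ n - m) :
    (Pstar n m b).coeff (n - m) = MvPolynomial.C (b 0) := by
  rw [Pstar, Polynomial.coeff_add, Polynomial.coeff_C_mul, Polynomial.coeff_X_pow, if_pos rfl,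
    Polynomial.finset_sum_coeff]
  have : ∀ i ∈ (Finset.univ : Finset (Fin n)),
      ((if (i : ℕ) < n - m then
        Polynomial.C (MvPolynomial.C (b ((i : ℕ) + 1)) * MvPolynomial.X i) *
          Polynomial.X ^ (n - m - 1 - (i : ℕ)) else 0)).coeff (n - m) = 0 := by
    intro i _
    by_cases hi : (i : ℕ) < n - m
    · rw [if_pos hi, Polynomial.coeff_C_mul, Polynomial.coeff_X_pow, if_neg (by omega), mul_zero]
    · rw [if_neg hi, Polynomial.coeff_zero]
  rw [Finset.sum_congr rfl this]
  simp

lemma Pstar_coeff_lt (n m : ℕ) (b : ℕ → ℂ) (t : ℕ) (h : t < n - m) :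
    (Pstar n m b).coeff t
      = MvPolynomial.C (b (n - m - t)) * MvPolynomial.X (⟨n - m - 1 - t, by omega⟩ : Fin n) := by
  rw [Pstar, Polynomial.coeff_add, Polynomial.coeff_C_mul, Polynomial.coeff_X_pow,
    if_neg (by omega), mul_zero, Polynomial.finset_sum_coeff, zero_add]
  rw [Finset.sum_eq_single_of_mem (⟨n - m - 1 - t, by omega⟩ : Fin n) (Finset.mem_univ _)]
  · rw [if_pos (by simp; omega), Polynomial.coeff_C_mul, Polynomial.coeff_X_pow,
      if_pos (by simp; omega), mul_one]
    have hnat : n - m - 1 - t + 1 = n - m - t := by omega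
    norm_num [hnat]
  · intro i _ hi
    by_cases hi' : (i : ℕ) < n - m
    · rw [if_pos hi', Polynomial.coeff_C_mul, Polynomial.coeff_X_pow, if_neg, mul_zero]
      intro hc
      apply hi
      apply Fin.ext
      simp only []
      omega
    · rw [if_neg hi', Polynomial.coeff_zero]

lemma Pstar_coeff_gt (n m : ℕ) (b : ℕ → ℂ) (t : ℕ) (h : n - m < t) :
    (Pstar n m b).coeff t = 0 := by
  rw [Pstar, Polynomial.coeff_add, Polynomial.coeff_C_mul, Polynomial.coeff_X_pow,
    if_neg (by omega), mul_zero, Polynomial.finset_sum_coeff, zero_add]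
  rw [Finset.sum_eq_zero]
  intro i _
  by_cases hi : (i : ℕ) < n - m
  · rw [if_pos hi, Polynomial.coeff_C_mul, Polynomial.coeff_X_pow, if_neg (by omega), mul_zero]
  · rw [if_neg hi, Polynomial.coeff_zero]


noncomputable def xv {n : ℕ} (k : Fin n) (t : ℕ) : MvPolynomial {j : Fin n // j ≠ k} ℂ :=
  if h : t < n ∧ t ≠ (k : ℕ) then
    MvPolynomial.X ⟨⟨t, h.1⟩, fun he => h.2 (by simpa using congrArg Fin.val he)⟩
  else 0

lemma xv_eq {n : ℕ} (k : Fin n) (t : ℕ) (h1 : t < n) (h2 : t ≠ (k : ℕ))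
    (i : {j : Fin n // j ≠ k}) (hi : ((i : Fin n) : ℕ) = t) : xv k t = MvPolynomial.X i := by
  rw [xv, dif_pos ⟨h1, h2⟩]
  congr 1
  apply Subtype.ext
  apply Fin.ext
  simp [hi]

lemma psiK_X_val {n : ℕ} (k : Fin n) (v : ℕ) (hv : v < n) :
    psiK k (MvPolynomial.X (⟨v, hv⟩ : Fin n))
      = if v = (k : ℕ) then Polynomial.X else Polynomial.C (xv k v) := by
  by_cases h : (⟨v, hv⟩ : Fin n) = k
  · rw [h, psiK_X_self, if_pos (by rw [← h])]
  · rw [psiK_X_ne k _ h, if_neg (by intro hvk; exact h (Fin.ext hvk))]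
    congr 1
    exact (xv_eq k v hv (by intro hvk; exact h (Fin.ext hvk)) ⟨⟨v, hv⟩, h⟩ rfl).symm

section Case1

variable (n m : ℕ) (b : ℕ → ℂ) (k : Fin n) (K : ℕ)

noncomputable def dco : ℕ → MvPolynomial {j : Fin n // j ≠ k} ℂ := fun t =>
  if t = 0 then MvPolynomial.C (b K - b 0)
  else if t = K then 0
  else if t ≤ n - m then MvPolynomial.C (b K - b t) * xv k (t - 1)
  else if t ≤ n then MvPolynomial.C (b K) * xv k (t - 1)
  else 0

noncomputable def eco : ℕ → MvPolynomial {j : Fin n // j ≠ k} ℂ := fun t =>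
  if t = 0 then MvPolynomial.C (b 0)
  else if t = K then 0
  else if t ≤ n - m then MvPolynomial.C (b t) * xv k (t - 1)
  else 0

noncomputable def Amat :
    Matrix (Fin (n - m + n)) (Fin (n - m + n)) (MvPolynomial {j : Fin n // j ≠ k} ℂ) :=
  Matrix.of fun i c =>
    if (i : ℕ) < n - m then
      (if (i : ℕ) ≤ (c : ℕ) ∧ (c : ℕ) ≤ (i : ℕ) + n then dco n m b k K ((c : ℕ) - (i : ℕ)) else 0)
    else
      (if (i : ℕ) - (n - m) ≤ (c : ℕ) ∧ (c : ℕ) ≤ (i : ℕ) then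
        eco n m b k K ((c : ℕ) + (n - m) - (i : ℕ)) else 0)

noncomputable def Bmat :
    Matrix (Fin (n - m + n)) (Fin (n - m + n)) (MvPolynomial {j : Fin n // j ≠ k} ℂ) :=
  Matrix.of fun i c =>
    if n - m ≤ (i : ℕ) ∧ (c : ℕ) = (i : ℕ) - (n - m) + K then MvPolynomial.C (b K) else 0

noncomputable def Lmat :
    Matrix (Fin (n - m + n)) (Fin (n - m + n)) (Polynomial (MvPolynomial {j : Fin n // j ≠ k} ℂ)) :=
  Matrix.of fun i c =>
    if (c : ℕ) = (i : ℕ) then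
      (if (i : ℕ) < n - m then Polynomial.C (MvPolynomial.C (b K)) else 1)
    else if (i : ℕ) < n - m ∧ (c : ℕ) = (i : ℕ) + (n - m) then -1 else 0

lemma Lmat_mul (hn : 4 ≤ n) (hm1 : 1 ≤ m) (hm : m ≤ n - 1) (hK1 : 1 ≤ K) (hK : K ≤ n - m)
    (hjk : (k : ℕ) = K - 1) :
    Lmat n m b k K * (sylv (Pgen n) (Pstar n m b) n (n - m)).map (psiK k)
      = Matrix.of fun i c =>
          Polynomial.C (Amat n m b k K i c) + Polynomial.X * Polynomial.C (Bmat n m b k K i c) := by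
  have hnm1 : 1 ≤ n - m := by omega
  set Nmat := (sylv (Pgen n) (Pstar n m b) n (n - m)).map (psiK k) with hNmat
  refine Matrix.ext fun i c => ?_
  rw [Matrix.mul_apply]
  by_cases hi : (i : ℕ) < n - m
  · -- row of the (modified) P-block
    have hi2lt : (i : ℕ) + (n - m) < n - m + n := by omega
    obtain ⟨i2, hvi2⟩ : ∃ i2 : Fin (n - m + n), (i2 : ℕ) = (i : ℕ) + (n - m) :=
      ⟨⟨(i : ℕ) + (n - m), hi2lt⟩, rfl⟩
    have hne : i ≠ i2 := by
      intro h
      have := congrArg Fin.val h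
      omega
    have hsum : ∀ jj : Fin (n - m + n),
        Lmat n m b k K i jj * Nmat jj c
          = (if jj = i then Polynomial.C (MvPolynomial.C (b K)) * Nmat i c else 0)
            + (if jj = i2 then -(Nmat i2 c) else 0) := by
      intro jj
      by_cases h1 : jj = i
      · subst h1
        rw [if_pos rfl, if_neg hne]
        rw [Lmat, Matrix.of_apply, if_pos rfl, if_pos hi, add_zero]
      · by_cases h2 : jj = i2
        · subst h2
          rw [if_neg h1, if_pos rfl, zero_add]
          rw [Lmat, Matrix.of_apply, if_neg (by omega), if_pos ⟨hi, by omega⟩]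
          ring
        · rw [if_neg h1, if_neg h2, add_zero]
          rw [Lmat, Matrix.of_apply,
            if_neg (fun h => h1 (Fin.ext h)),
            if_neg (by
              rintro ⟨-, h⟩
              exact h2 (Fin.ext (by omega))), zero_mul]
    rw [Finset.sum_congr rfl (fun jj _ => hsum jj), Finset.sum_add_distrib,
      Finset.sum_ite_eq' Finset.univ i (fun _ => Polynomial.C (MvPolynomial.C (b K)) * Nmat i c),
      Finset.sum_ite_eq' Finset.univ i2 (fun _ => -(Nmat i2 c)),
      if_pos (Finset.mem_univ i), if_pos (Finset.mem_univ i2)]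
    have hNic : Nmat i c = psiK k (if (i : ℕ) ≤ (c : ℕ) ∧ (c : ℕ) ≤ (i : ℕ) + n then
        (Pgen n).coeff (n + (i : ℕ) - (c : ℕ)) else 0) := by
      rw [hNmat, Matrix.map_apply, sylv, Matrix.of_apply, if_pos hi]
    have hNi2c : Nmat i2 c = psiK k (if (i : ℕ) ≤ (c : ℕ) ∧ (c : ℕ) ≤ (i : ℕ) + (n - m) then
        (Pstar n m b).coeff ((i : ℕ) + (n - m) - (c : ℕ)) else 0) := by
      rw [hNmat, Matrix.map_apply, sylv, Matrix.of_apply, if_neg (by omega), hvi2]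
      have e0 : (i : ℕ) + (n - m) - (n - m) = (i : ℕ) := by omega
      rw [e0]
    rw [hNic, hNi2c, Matrix.of_apply, Amat, Matrix.of_apply, if_pos hi, Bmat, Matrix.of_apply,
      if_neg (show ¬(n - m ≤ (i : ℕ) ∧ (c : ℕ) = (i : ℕ) - (n - m) + K) from by rintro ⟨h, -⟩; omega)]
    by_cases hc1 : (i : ℕ) ≤ (c : ℕ)
    · by_cases hc2 : (c : ℕ) ≤ (i : ℕ) + (n - m)
      · -- overlap range: both P and P_* contribute
        have hA : (i : ℕ) ≤ (c : ℕ) ∧ (c : ℕ) ≤ (i : ℕ) + n := ⟨hc1, by omega⟩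
        have hB : (i : ℕ) ≤ (c : ℕ) ∧ (c : ℕ) ≤ (i : ℕ) + (n - m) := ⟨hc1, hc2⟩
        rw [if_pos hA, if_pos hB, if_pos hA]
        by_cases hc0 : (c : ℕ) = (i : ℕ)
        · -- t = 0
          have e1 : n + (i : ℕ) - (c : ℕ) = n := by omega
          have e2 : (i : ℕ) + (n - m) - (c : ℕ) = n - m := by omega
          have e3 : (c : ℕ) - (i : ℕ) = 0 := by omega
          rw [e1, e2, e3, Pgen_coeff_top n (by omega), Pstar_coeff_top n m b hnm1,
            map_one, psiK_C, dco, if_pos rfl]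
          simp [map_sub, sub_eq_add_neg]
        · -- t ≥ 1
          have ht1 : 1 ≤ (c : ℕ) - (i : ℕ) := by omega
          have e1 : n + (i : ℕ) - (c : ℕ) = n - ((c : ℕ) - (i : ℕ)) := by omega
          have e1lt : n - ((c : ℕ) - (i : ℕ)) < n := by omega
          have e2 : (i : ℕ) + (n - m) - (c : ℕ) = n - m - ((c : ℕ) - (i : ℕ)) := by omega
          have e2lt : n - m - ((c : ℕ) - (i : ℕ)) < n - m := by omega
          rw [e1, e2, Pgen_coeff_lt n _ e1lt, Pstar_coeff_lt n m b _ e2lt, map_mul, psiK_C,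
            psiK_X_val, psiK_X_val]
          have ev1 : n - 1 - (n - ((c : ℕ) - (i : ℕ))) = (c : ℕ) - (i : ℕ) - 1 := by omega
          have ev2 : n - m - 1 - (n - m - ((c : ℕ) - (i : ℕ))) = (c : ℕ) - (i : ℕ) - 1 := by omega
          have ev3 : n - m - (n - m - ((c : ℕ) - (i : ℕ))) = (c : ℕ) - (i : ℕ) := by omega
          rw [ev1, ev2, ev3]
          by_cases hcK : (c : ℕ) - (i : ℕ) = K
          · rw [if_pos (show (c : ℕ) - (i : ℕ) - 1 = (k : ℕ) from by omega), dco,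
              if_neg (show ¬((c : ℕ) - (i : ℕ) = 0) from by omega), if_pos hcK, hcK, map_zero]
            ring
          · rw [if_neg (show ¬((c : ℕ) - (i : ℕ) - 1 = (k : ℕ)) from by omega), dco,
              if_neg (show ¬((c : ℕ) - (i : ℕ) = 0) from by omega), if_neg hcK,
              if_pos (show (c : ℕ) - (i : ℕ) ≤ n - m from by omega)]
            simp only [map_sub, map_mul, map_zero, mul_zero, add_zero]
            ring
      · by_cases hc3 : (c : ℕ) ≤ (i : ℕ) + n
        · -- pure P range
          have hA : (i : ℕ) ≤ (c : ℕ) ∧ (c : ℕ) ≤ (i : ℕ) + n := ⟨hc1, hc3⟩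
          rw [if_pos hA, if_neg (show ¬((i : ℕ) ≤ (c : ℕ) ∧ (c : ℕ) ≤ (i : ℕ) + (n - m)) from by
            rintro ⟨-, h⟩; omega), if_pos hA, map_zero]
          have e1 : n + (i : ℕ) - (c : ℕ) = n - ((c : ℕ) - (i : ℕ)) := by omega
          have e1lt : n - ((c : ℕ) - (i : ℕ)) < n := by omega
          rw [e1, Pgen_coeff_lt n _ e1lt, psiK_X_val]
          have ev1 : n - 1 - (n - ((c : ℕ) - (i : ℕ))) = (c : ℕ) - (i : ℕ) - 1 := by omega
          rw [ev1, if_neg (show ¬((c : ℕ) - (i : ℕ) - 1 = (k : ℕ)) from by omega), dco,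
            if_neg (show ¬((c : ℕ) - (i : ℕ) = 0) from by omega),
            if_neg (show ¬((c : ℕ) - (i : ℕ) = K) from by omega),
            if_neg (show ¬((c : ℕ) - (i : ℕ) ≤ n - m) from by omega),
            if_pos (show (c : ℕ) - (i : ℕ) ≤ n from by omega)]
          simp only [map_mul, map_zero, mul_zero, add_zero]
          ring
        · -- out of range (right)
          rw [if_neg (show ¬((i : ℕ) ≤ (c : ℕ) ∧ (c : ℕ) ≤ (i : ℕ) + n) from by
              rintro ⟨-, h⟩; omega),
            if_neg (show ¬((i : ℕ) ≤ (c : ℕ) ∧ (c : ℕ) ≤ (i : ℕ) + (n - m)) from by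
              rintro ⟨-, h⟩; omega),
            if_neg (show ¬((i : ℕ) ≤ (c : ℕ) ∧ (c : ℕ) ≤ (i : ℕ) + n) from by
              rintro ⟨-, h⟩; omega), map_zero, map_zero]
          simp
    · -- out of range (left)
      rw [if_neg (show ¬((i : ℕ) ≤ (c : ℕ) ∧ (c : ℕ) ≤ (i : ℕ) + n) from by
          rintro ⟨h, -⟩; omega),
        if_neg (show ¬((i : ℕ) ≤ (c : ℕ) ∧ (c : ℕ) ≤ (i : ℕ) + (n - m)) from by
          rintro ⟨h, -⟩; omega),
        if_neg (show ¬((i : ℕ) ≤ (c : ℕ) ∧ (c : ℕ) ≤ (i : ℕ) + n) from by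
          rintro ⟨h, -⟩; omega), map_zero, map_zero]
      simp
  · -- P_*-block row: the L-row is just the unit row
    have hsum : ∀ jj : Fin (n - m + n),
        Lmat n m b k K i jj * Nmat jj c = (if jj = i then Nmat i c else 0) := by
      intro jj
      by_cases h1 : jj = i
      · subst h1
        rw [if_pos rfl, Lmat, Matrix.of_apply, if_pos rfl, if_neg hi, one_mul]
      · rw [if_neg h1, Lmat, Matrix.of_apply, if_neg (fun h => h1 (Fin.ext h)),
          if_neg (by rintro ⟨h, -⟩; exact hi h), zero_mul]
    rw [Finset.sum_congr rfl (fun jj _ => hsum jj),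
      Finset.sum_ite_eq' Finset.univ i (fun _ => Nmat i c), if_pos (Finset.mem_univ i)]
    have hNic : Nmat i c = psiK k (if (i : ℕ) - (n - m) ≤ (c : ℕ) ∧ (c : ℕ) ≤ (i : ℕ) then
        (Pstar n m b).coeff ((i : ℕ) - (c : ℕ)) else 0) := by
      rw [hNmat, Matrix.map_apply, sylv, Matrix.of_apply, if_neg hi]
    rw [hNic, Matrix.of_apply, Amat, Matrix.of_apply, if_neg hi, Bmat, Matrix.of_apply]
    by_cases hc1 : (i : ℕ) - (n - m) ≤ (c : ℕ) ∧ (c : ℕ) ≤ (i : ℕ)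
    · rw [if_pos hc1, if_pos hc1]
      obtain ⟨hc1a, hc1b⟩ := hc1
      by_cases hc0 : (c : ℕ) = (i : ℕ) - (n - m)
      · -- t = 0
        have e1 : (i : ℕ) - (c : ℕ) = n - m := by omega
        have e2 : (c : ℕ) + (n - m) - (i : ℕ) = 0 := by omega
        rw [e1, e2, Pstar_coeff_top n m b hnm1, psiK_C, eco, if_pos rfl,
          if_neg (show ¬(n - m ≤ (i : ℕ) ∧ (c : ℕ) = (i : ℕ) - (n - m) + K) from by
            rintro ⟨-, h⟩; omega)]
        simp
      · -- t ≥ 1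
        have e1 : (i : ℕ) - (c : ℕ) = n - m - ((c : ℕ) + (n - m) - (i : ℕ)) := by omega
        have e1lt : n - m - ((c : ℕ) + (n - m) - (i : ℕ)) < n - m := by omega
        rw [e1, Pstar_coeff_lt n m b _ e1lt, map_mul, psiK_C, psiK_X_val]
        have ev1 : n - m - 1 - (n - m - ((c : ℕ) + (n - m) - (i : ℕ)))
            = (c : ℕ) + (n - m) - (i : ℕ) - 1 := by omega
        have ev2 : n - m - (n - m - ((c : ℕ) + (n - m) - (i : ℕ)))
            = (c : ℕ) + (n - m) - (i : ℕ) := by omega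
        rw [ev1, ev2]
        by_cases hcK : (c : ℕ) + (n - m) - (i : ℕ) = K
        · rw [if_pos (show (c : ℕ) + (n - m) - (i : ℕ) - 1 = (k : ℕ) from by omega), eco,
            if_neg (show ¬((c : ℕ) + (n - m) - (i : ℕ) = 0) from by omega), if_pos hcK, hcK,
            if_pos (show n - m ≤ (i : ℕ) ∧ (c : ℕ) = (i : ℕ) - (n - m) + K from
              ⟨by omega, by omega⟩), map_zero]
          ring
        · rw [if_neg (show ¬((c : ℕ) + (n - m) - (i : ℕ) - 1 = (k : ℕ)) from by omega), eco,
            if_neg (show ¬((c : ℕ) + (n - m) - (i : ℕ) = 0) from by omega), if_neg hcK,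
            if_pos (show (c : ℕ) + (n - m) - (i : ℕ) ≤ n - m from by omega),
            if_neg (show ¬(n - m ≤ (i : ℕ) ∧ (c : ℕ) = (i : ℕ) - (n - m) + K) from by
              rintro ⟨-, h⟩; omega), map_mul]
          simp
    · rw [if_neg hc1, if_neg hc1,
        if_neg (show ¬(n - m ≤ (i : ℕ) ∧ (c : ℕ) = (i : ℕ) - (n - m) + K) from by
          rintro ⟨h1, h2⟩; apply hc1; constructor <;> omega), map_zero]
      simp

lemma card_filter_ge_fin (N v : ℕ) (h : v ≤ N) :
    ((Finset.univ : Finset (Fin N)).filter (fun i : Fin N => v ≤ (i : ℕ))).card = N - v := by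
  rw [Finset.card_filter]
  rw [Fin.sum_univ_eq_sum_range (fun i => if v ≤ i then 1 else 0) N]
  rw [Finset.range_eq_Ico, ← Finset.sum_Ico_consecutive _ (Nat.zero_le v) h]
  have e1 : ∀ p ∈ Finset.Ico 0 v, (if v ≤ p then (1:ℕ) else 0) = 0 := by
    intro p hp; rw [Finset.mem_Ico] at hp; rw [if_neg (by omega)]
  have e2 : ∀ p ∈ Finset.Ico v N, (if v ≤ p then (1:ℕ) else 0) = 1 := by
    intro p hp; rw [Finset.mem_Ico] at hp; rw [if_pos hp.1]
  rw [Finset.sum_congr rfl e1, Finset.sum_congr rfl e2]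
  simp

lemma Lmat_det (n m : ℕ) (b : ℕ → ℂ) (k : Fin n) (K : ℕ) :
    (Lmat n m b k K).det = Polynomial.C (MvPolynomial.C (b K)) ^ (n - m) := by
  rw [Matrix.det_of_upperTriangular (by
    intro p q hlt
    have hlt' : (q : ℕ) < (p : ℕ) := hlt
    rw [Lmat, Matrix.of_apply, if_neg (by omega), if_neg (by rintro ⟨-, h⟩; omega)])]
  have hdiag : ∀ p : Fin (n - m + n), Lmat n m b k K p p
      = (if (p : ℕ) < n - m then Polynomial.C (MvPolynomial.C (b K)) else
         if (p : ℕ) < n - m then Polynomial.C (MvPolynomial.C (b K)) else 1) := by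
    intro p
    rw [Lmat, Matrix.of_apply, if_pos rfl]
    by_cases h : (p : ℕ) < n - m
    · rw [if_pos h, if_pos h]
    · rw [if_neg h, if_neg h]
  rw [Finset.prod_congr rfl (fun p _ => hdiag p),
    prod_fin_three (n - m) (n - m) le_rfl (by omega) _ _ _]
  simp

lemma case1 (n m : ℕ) (b : ℕ → ℂ) (hn : 4 ≤ n) (hm1 : 1 ≤ m) (hm : m ≤ n - 1)
    (K : ℕ) (hK1 : 1 ≤ K) (hK : K ≤ n - m) (jk : Fin n) (hjk : (jk : ℕ) = K - 1)
    (an : {i : Fin n // i ≠ jk}) (han : ((an : Fin n) : ℕ) = n - 1) (hbK : b K ≠ 0) :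
    ∃ ε : ℂ, (ε = 1 ∨ ε = -1) ∧
      (polyInK jk (Dtilde n m b)).coeff n
        = MvPolynomial.C (ε * b K ^ n * (1 - b 0 / b K) ^ K) * MvPolynomial.X an ^ (n - m - K) := by
  classical
  have hnm1 : 1 ≤ n - m := by omega
  set Nmat := (sylv (Pgen n) (Pstar n m b) n (n - m)).map (psiK jk) with hNmat
  have hpoly : polyInK jk (Dtilde n m b) = Nmat.det := by
    rw [polyInK_eq_psiK, Dtilde, res, AlgHom.map_det, AlgHom.mapMatrix_apply]
  have hLM := Lmat_mul n m b jk K hn hm1 hm hK1 hK hjk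
  set S0 := (Finset.univ : Finset (Fin (n - m + n))).filter
    (fun i : Fin (n - m + n) => n - m ≤ (i : ℕ)) with hS0
  have hmem : ∀ i : Fin (n - m + n), i ∈ S0 ↔ n - m ≤ (i : ℕ) := fun i => by
    rw [hS0, Finset.mem_filter]
    simp
  have hS0card : S0.card = n := by
    rw [hS0, card_filter_ge_fin (n - m + n) (n - m) (by omega)]
    omega
  have hcoeff : ((Matrix.det (Matrix.of fun i c => Polynomial.C (Amat n m b jk K i c)
        + Polynomial.X * Polynomial.C (Bmat n m b jk K i c)))).coeff n
      = Matrix.det (Matrix.of fun i c =>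
          if i ∈ S0 then Bmat n m b jk K i c else Amat n m b jk K i c) :=
    coeff_det_linear _ _ S0 n hS0card (fun i hi c => by
      rw [Bmat, Matrix.of_apply, if_neg (by
        rintro ⟨h1, -⟩
        exact hi ((hmem i).mpr h1))])
  set Mx := Matrix.of fun i c =>
    if i ∈ S0 then Bmat n m b jk K i c else Amat n m b jk K i c with hMx
  -- the permutations
  obtain ⟨f, hf⟩ : ∃ f : Fin (n - m + n) → Fin (n - m + n), ∀ p, (f p : ℕ)
      = (if (p : ℕ) < K then (p : ℕ) else if (p : ℕ) < n - m then
          n - m - 1 - ((p : ℕ) - K) else (p : ℕ)) :=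
    ⟨fun p => ⟨if (p : ℕ) < K then (p : ℕ) else if (p : ℕ) < n - m then
        n - m - 1 - ((p : ℕ) - K) else (p : ℕ), by
      have hp := p.isLt; split_ifs <;> omega⟩, fun p => rfl⟩
  obtain ⟨g, hg⟩ : ∃ g : Fin (n - m + n) → Fin (n - m + n), ∀ q, (g q : ℕ)
      = (if (q : ℕ) < K then (q : ℕ) else if (q : ℕ) < n - m then
          n - m + n - 1 - ((q : ℕ) - K) else (q : ℕ) - (n - m) + K) :=
    ⟨fun q => ⟨if (q : ℕ) < K then (q : ℕ) else if (q : ℕ) < n - m then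
        n - m + n - 1 - ((q : ℕ) - K) else (q : ℕ) - (n - m) + K, by
      have hq := q.isLt; split_ifs <;> omega⟩, fun q => rfl⟩
  have hfinj : Function.Injective f := by
    intro p q h
    have hv := congrArg Fin.val h
    rw [hf p, hf q] at hv
    have hp := p.isLt; have hq := q.isLt
    apply Fin.ext
    split_ifs at hv <;> omega
  have hginj : Function.Injective g := by
    intro p q h
    have hv := congrArg Fin.val h
    rw [hg p, hg q] at hv
    have hp := p.isLt; have hq := q.isLt
    apply Fin.ext
    split_ifs at hv <;> omega
  have h0 : ∀ p q : Fin (n - m + n), q < p → Mx (f p) (g q) = 0 := by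
    intro p q hlt
    have hlt' : (q : ℕ) < (p : ℕ) := hlt
    have hfp := hf p; have hgq := hg q
    have hp := p.isLt; have hq := q.isLt
    rw [hMx, Matrix.of_apply]
    by_cases hrow : n - m ≤ (f p : ℕ)
    · rw [if_pos ((hmem _).mpr hrow), Bmat, Matrix.of_apply, if_neg (by
        rintro ⟨-, hcol⟩
        rw [hgq] at hcol
        split_ifs at hfp hcol <;> omega)]
    · rw [if_neg (fun hmem' => hrow ((hmem _).mp hmem')), Amat, Matrix.of_apply,
        if_pos (by omega), if_neg (by
          rintro ⟨h1, h2⟩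
          rw [hfp] at h1 h2
          rw [hgq] at h1 h2
          split_ifs at hfp h1 h2 <;> omega)]
  have hdiag : ∀ p : Fin (n - m + n), Mx (f p) (g p)
      = (if (p : ℕ) < K then MvPolynomial.C (b K - b 0) else if (p : ℕ) < n - m then
          MvPolynomial.C (b K) * xv jk (n - 1) else MvPolynomial.C (b K)) := by
    intro p
    have hfp := hf p; have hgp := hg p; have hp := p.isLt
    rw [hMx, Matrix.of_apply]
    by_cases h1 : (p : ℕ) < K
    · rw [if_pos h1] at hfp hgp
      rw [if_neg (by rw [hmem]; omega), Amat, Matrix.of_apply, if_pos (by omega),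
        if_pos (by constructor <;> omega)]
      have e0 : (g p : ℕ) - (f p : ℕ) = 0 := by omega
      rw [e0, dco, if_pos rfl, if_pos h1]
    · by_cases h2 : (p : ℕ) < n - m
      · rw [if_neg h1, if_pos h2] at hfp hgp
        rw [if_neg (by rw [hmem]; omega), Amat, Matrix.of_apply, if_pos (by omega),
          if_pos (by constructor <;> omega)]
        have e0 : (g p : ℕ) - (f p : ℕ) = n := by omega
        rw [e0, dco, if_neg (by omega), if_neg (by omega), if_neg (by omega),
          if_pos le_rfl, if_neg h1, if_pos h2]
      · rw [if_neg h1, if_neg h2] at hfp hgp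
        rw [if_pos ((hmem _).mpr (by omega)), Bmat, Matrix.of_apply,
          if_pos (by constructor <;> omega), if_neg h1, if_neg h2]
  obtain ⟨ε0, hε0, hdet⟩ := det_eq_pm_prod Mx f g hfinj hginj h0
  rw [Finset.prod_congr rfl (fun p _ => hdiag p),
    prod_fin_three K (n - m) hK (by omega) _ _ _,
    show n - m + n - (n - m) = n from by omega] at hdet
  -- identify the last variable
  have hna : xv jk (n - 1) = MvPolynomial.X an :=
    xv_eq jk (n - 1) (by omega) (by omega) an han
  rw [hna] at hdet
  -- put everything together
  have hCne : (MvPolynomial.C (b K) : MvPolynomial {i : Fin n // i ≠ jk} ℂ) ≠ 0 := by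
    simpa using hbK
  have hchain : (MvPolynomial.C (b K)) ^ (n - m) * (polyInK jk (Dtilde n m b)).coeff n
      = Mx.det := by
    rw [hpoly]
    have h1 : (MvPolynomial.C (b K)) ^ (n - m) * (Nmat.det).coeff n
        = ((Polynomial.C (MvPolynomial.C (b K)) ^ (n - m)) * Nmat.det).coeff n := by
      rw [← Polynomial.C_pow, Polynomial.coeff_C_mul]
    rw [h1, ← Lmat_det n m b jk K, ← Matrix.det_mul, hLM, hcoeff]
  rw [hdet] at hchain
  -- scalar identity
  have hsc : ∀ ε : ℂ, (ε = 1 ∨ ε = -1) →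
      (b K - b 0) ^ K * (b K ^ (n - m - K) * b K ^ n) * ε
        = b K ^ (n - m) * (ε * b K ^ n * (1 - b 0 / b K) ^ K) := by
    intro ε _
    have h2 : (1 - b 0 / b K) = (b K - b 0) / b K := by field_simp
    have hpadd : b K ^ (n - m) = b K ^ (n - m - K) * b K ^ K := by
      rw [← pow_add]; congr 1; omega
    rw [h2, div_pow, hpadd]
    field_simp
  have hXfree : ∀ ε : ℂ, (ε = 1 ∨ ε = -1) →
      (MvPolynomial.C (b K - b 0) : MvPolynomial {i : Fin n // i ≠ jk} ℂ) ^ K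
          * ((MvPolynomial.C (b K)) ^ (n - m - K)
          * (MvPolynomial.C (b K)) ^ n) * MvPolynomial.C ε
        = (MvPolynomial.C (b K)) ^ (n - m)
          * MvPolynomial.C (ε * b K ^ n * (1 - b 0 / b K) ^ K) := by
    intro ε hε
    rw [← map_pow, ← map_pow, ← map_pow, ← map_pow, ← map_mul, ← map_mul, ← map_mul, ← map_mul]
    exact congrArg _ (hsc ε hε)
  rcases hε0 with h | h
  · refine ⟨1, Or.inl rfl, ?_⟩
    apply mul_left_cancel₀ (pow_ne_zero (n - m) hCne)
    rw [hchain, h, mul_pow]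
    have h3 := hXfree 1 (Or.inl rfl)
    rw [map_one, mul_one] at h3
    linear_combination (MvPolynomial.X an : MvPolynomial {i : Fin n // i ≠ jk} ℂ) ^ (n - m - K) * h3
  · refine ⟨-1, Or.inr rfl, ?_⟩
    apply mul_left_cancel₀ (pow_ne_zero (n - m) hCne)
    rw [hchain, h]
    have := hXfree (-1) (Or.inr rfl)
    rw [map_neg, map_one, mul_neg, mul_one] at this
    rw [mul_pow]
    linear_combination (MvPolynomial.X an : MvPolynomial {i : Fin n // i ≠ jk} ℂ) ^ (n - m - K) * this

end Case1

section Case2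

variable (n m : ℕ) (b : ℕ → ℂ) (k : Fin n) (K : ℕ)

noncomputable def aco : ℕ → MvPolynomial {j : Fin n // j ≠ k} ℂ := fun t =>
  if t = 0 then 1 else if t = K then 0 else if t ≤ n then xv k (t - 1) else 0

noncomputable def A2mat :
    Matrix (Fin (n - m + n)) (Fin (n - m + n)) (MvPolynomial {j : Fin n // j ≠ k} ℂ) :=
  Matrix.of fun i c =>
    if (i : ℕ) < n - m then
      (if (i : ℕ) ≤ (c : ℕ) ∧ (c : ℕ) ≤ (i : ℕ) + n then aco n k K ((c : ℕ) - (i : ℕ)) else 0)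
    else
      (if (i : ℕ) - (n - m) ≤ (c : ℕ) ∧ (c : ℕ) ≤ (i : ℕ) then
        eco n m b k K ((c : ℕ) + (n - m) - (i : ℕ)) else 0)

noncomputable def B2mat :
    Matrix (Fin (n - m + n)) (Fin (n - m + n)) (MvPolynomial {j : Fin n // j ≠ k} ℂ) :=
  Matrix.of fun i c =>
    if (i : ℕ) < n - m ∧ (c : ℕ) = (i : ℕ) + K then 1 else 0

lemma N2_eq (hn : 4 ≤ n) (hm1 : 1 ≤ m) (hm : m ≤ n - 1) (hK1 : n - m < K) (hK2 : K ≤ n - 1)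
    (hjk : (k : ℕ) = K - 1) :
    (sylv (Pgen n) (Pstar n m b) n (n - m)).map (psiK k)
      = Matrix.of fun i c =>
          Polynomial.C (A2mat n m b k K i c) + Polynomial.X * Polynomial.C (B2mat n m k K i c) := by
  have hnm1 : 1 ≤ n - m := by omega
  refine Matrix.ext fun i c => ?_
  rw [Matrix.map_apply, sylv, Matrix.of_apply, Matrix.of_apply, A2mat, Matrix.of_apply,
    B2mat, Matrix.of_apply]
  by_cases hi : (i : ℕ) < n - m
  · rw [if_pos hi, if_pos hi]
    by_cases hc1 : (i : ℕ) ≤ (c : ℕ) ∧ (c : ℕ) ≤ (i : ℕ) + n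
    · rw [if_pos hc1, if_pos hc1]
      obtain ⟨hc1a, hc1b⟩ := hc1
      by_cases hc0 : (c : ℕ) = (i : ℕ)
      · have e1 : n + (i : ℕ) - (c : ℕ) = n := by omega
        have e3 : (c : ℕ) - (i : ℕ) = 0 := by omega
        rw [e1, e3, Pgen_coeff_top n (by omega), map_one, aco, if_pos rfl,
          if_neg (by rintro ⟨-, h⟩; omega)]
        simp
      · have e1 : n + (i : ℕ) - (c : ℕ) = n - ((c : ℕ) - (i : ℕ)) := by omega
        have e1lt : n - ((c : ℕ) - (i : ℕ)) < n := by omega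
        rw [e1, Pgen_coeff_lt n _ e1lt, psiK_X_val]
        have ev1 : n - 1 - (n - ((c : ℕ) - (i : ℕ))) = (c : ℕ) - (i : ℕ) - 1 := by omega
        rw [ev1]
        by_cases hcK : (c : ℕ) - (i : ℕ) = K
        · rw [if_pos (show (c : ℕ) - (i : ℕ) - 1 = (k : ℕ) from by omega), aco,
            if_neg (by omega), if_pos hcK, if_pos ⟨hi, by omega⟩]
          simp
        · rw [if_neg (show ¬((c : ℕ) - (i : ℕ) - 1 = (k : ℕ)) from by omega), aco,
            if_neg (by omega), if_neg hcK, if_pos (by omega),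
            if_neg (by rintro ⟨-, h⟩; omega)]
          simp
    · rw [if_neg hc1, if_neg hc1, if_neg (by rintro ⟨-, h⟩; rw [not_and_or] at hc1; omega),
        map_zero]
      simp
  · rw [if_neg hi, if_neg hi,
      if_neg (show ¬((i : ℕ) < n - m ∧ (c : ℕ) = (i : ℕ) + K) from by rintro ⟨h, -⟩; exact hi h)]
    by_cases hc1 : (i : ℕ) - (n - m) ≤ (c : ℕ) ∧ (c : ℕ) ≤ (i : ℕ)
    · rw [if_pos hc1, if_pos hc1]
      obtain ⟨hc1a, hc1b⟩ := hc1
      by_cases hc0 : (c : ℕ) = (i : ℕ) - (n - m)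
      · have e1 : (i : ℕ) - (c : ℕ) = n - m := by omega
        have e2 : (c : ℕ) + (n - m) - (i : ℕ) = 0 := by omega
        rw [e1, e2, Pstar_coeff_top n m b hnm1, psiK_C, eco, if_pos rfl]
        simp
      · have e1 : (i : ℕ) - (c : ℕ) = n - m - ((c : ℕ) + (n - m) - (i : ℕ)) := by omega
        have e1lt : n - m - ((c : ℕ) + (n - m) - (i : ℕ)) < n - m := by omega
        rw [e1, Pstar_coeff_lt n m b _ e1lt, map_mul, psiK_C, psiK_X_val]
        have ev1 : n - m - 1 - (n - m - ((c : ℕ) + (n - m) - (i : ℕ)))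
            = (c : ℕ) + (n - m) - (i : ℕ) - 1 := by omega
        have ev2 : n - m - (n - m - ((c : ℕ) + (n - m) - (i : ℕ)))
            = (c : ℕ) + (n - m) - (i : ℕ) := by omega
        rw [ev1, ev2, if_neg (show ¬((c : ℕ) + (n - m) - (i : ℕ) - 1 = (k : ℕ)) from by omega),
          eco, if_neg (show ¬((c : ℕ) + (n - m) - (i : ℕ) = 0) from by omega),
          if_neg (show ¬((c : ℕ) + (n - m) - (i : ℕ) = K) from by omega),
          if_pos (show (c : ℕ) + (n - m) - (i : ℕ) ≤ n - m from by omega), map_mul]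
        simp
    · rw [if_neg hc1, if_neg hc1, map_zero]
      simp

lemma case2 (n m : ℕ) (b : ℕ → ℂ) (hn : 4 ≤ n) (hm1 : 1 ≤ m) (hm : m ≤ n - 1)
    (s : ℕ) (hs1 : 1 ≤ s) (hs2 : s ≤ m - 1) (sk : Fin n) (hsk : (sk : ℕ) = n - m + s - 1)
    (anm : {i : Fin n // i ≠ sk}) (hanm : ((anm : Fin n) : ℕ) = n - m - 1) :
    ∃ ε : ℂ, (ε = 1 ∨ ε = -1) ∧
      (polyInK sk (Dtilde n m b)).coeff (n - m)
        = MvPolynomial.C (ε * b (n - m) ^ (m - s) * b 0 ^ (n - m + s))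
            * MvPolynomial.X anm ^ (m - s) := by
  classical
  have hnm1 : 1 ≤ n - m := by omega
  set K := n - m + s with hKdef
  have hK1 : n - m < K := by omega
  have hK2 : K ≤ n - 1 := by omega
  have hjk : (sk : ℕ) = K - 1 := by omega
  have hpoly : polyInK sk (Dtilde n m b)
      = ((sylv (Pgen n) (Pstar n m b) n (n - m)).map (psiK sk)).det := by
    rw [polyInK_eq_psiK, Dtilde, res, AlgHom.map_det, AlgHom.mapMatrix_apply]
  have hN2 := N2_eq n m b sk K hn hm1 hm hK1 hK2 hjk
  set S0 := (Finset.univ : Finset (Fin (n - m + n))).filter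
    (fun i : Fin (n - m + n) => (i : ℕ) < n - m) with hS0
  have hmem : ∀ i : Fin (n - m + n), i ∈ S0 ↔ (i : ℕ) < n - m := fun i => by
    rw [hS0, Finset.mem_filter]
    simp
  have hS0card : S0.card = n - m := by
    rw [hS0, card_filter_lt_fin (n - m + n) (n - m) (by omega)]
  have hcoeff : ((Matrix.det (Matrix.of fun i c => Polynomial.C (A2mat n m b sk K i c)
        + Polynomial.X * Polynomial.C (B2mat n m sk K i c)))).coeff (n - m)
      = Matrix.det (Matrix.of fun i c =>
          if i ∈ S0 then B2mat n m sk K i c else A2mat n m b sk K i c) :=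
    coeff_det_linear _ _ S0 (n - m) hS0card (fun i hi c => by
      rw [B2mat, Matrix.of_apply, if_neg (by
        rintro ⟨h1, -⟩
        exact hi ((hmem i).mpr h1))])
  set Mx := Matrix.of fun i c =>
    if i ∈ S0 then B2mat n m sk K i c else A2mat n m b sk K i c with hMx
  obtain ⟨f, hf⟩ : ∃ f : Fin (n - m + n) → Fin (n - m + n), ∀ p, (f p : ℕ)
      = (if (p : ℕ) < K then (p : ℕ) + (n - m) else if (p : ℕ) < n then
          n - m + n - 1 - ((p : ℕ) - K) else (p : ℕ) - n) :=
    ⟨fun p => ⟨if (p : ℕ) < K then (p : ℕ) + (n - m) else if (p : ℕ) < n then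
        n - m + n - 1 - ((p : ℕ) - K) else (p : ℕ) - n, by
      have hp := p.isLt; split_ifs <;> omega⟩, fun p => rfl⟩
  obtain ⟨g, hg⟩ : ∃ g : Fin (n - m + n) → Fin (n - m + n), ∀ q, (g q : ℕ)
      = (if (q : ℕ) < K then (q : ℕ) else if (q : ℕ) < n then
          n - m + n - 1 - ((q : ℕ) - K) else (q : ℕ) - n + K) :=
    ⟨fun q => ⟨if (q : ℕ) < K then (q : ℕ) else if (q : ℕ) < n then
        n - m + n - 1 - ((q : ℕ) - K) else (q : ℕ) - n + K, by
      have hq := q.isLt; split_ifs <;> omega⟩, fun q => rfl⟩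
  have hfinj : Function.Injective f := by
    intro p q h
    have hv := congrArg Fin.val h
    rw [hf p, hf q] at hv
    have hp := p.isLt; have hq := q.isLt
    apply Fin.ext
    split_ifs at hv <;> omega
  have hginj : Function.Injective g := by
    intro p q h
    have hv := congrArg Fin.val h
    rw [hg p, hg q] at hv
    have hp := p.isLt; have hq := q.isLt
    apply Fin.ext
    split_ifs at hv <;> omega
  have h0 : ∀ p q : Fin (n - m + n), q < p → Mx (f p) (g q) = 0 := by
    intro p q hlt
    have hlt' : (q : ℕ) < (p : ℕ) := hlt
    have hfp := hf p; have hgq := hg q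
    have hp := p.isLt; have hq := q.isLt
    rw [hMx, Matrix.of_apply]
    by_cases hrow : (f p : ℕ) < n - m
    · rw [if_pos ((hmem _).mpr hrow), B2mat, Matrix.of_apply, if_neg (by
        rintro ⟨-, hcol⟩
        rw [hgq] at hcol
        split_ifs at hfp hcol <;> omega)]
    · rw [if_neg (fun hmem' => hrow ((hmem _).mp hmem')), A2mat, Matrix.of_apply,
        if_neg hrow, if_neg (by
          rintro ⟨h1, h2⟩
          rw [hfp] at h1 h2
          rw [hgq] at h1 h2
          split_ifs at hfp h1 h2 <;> omega)]
  have hdiag : ∀ p : Fin (n - m + n), Mx (f p) (g p)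
      = (if (p : ℕ) < K then MvPolynomial.C (b 0) else if (p : ℕ) < n then
          MvPolynomial.C (b (n - m)) * xv sk (n - m - 1) else 1) := by
    intro p
    have hfp := hf p; have hgp := hg p; have hp := p.isLt
    rw [hMx, Matrix.of_apply]
    by_cases h1 : (p : ℕ) < K
    · rw [if_pos h1] at hfp hgp
      rw [if_neg (by rw [hmem]; omega), A2mat, Matrix.of_apply, if_neg (by omega),
        if_pos (by constructor <;> omega)]
      have e0 : (g p : ℕ) + (n - m) - (f p : ℕ) = 0 := by omega
      rw [e0, eco, if_pos rfl, if_pos h1]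
    · by_cases h2 : (p : ℕ) < n
      · rw [if_neg h1, if_pos h2] at hfp hgp
        rw [if_neg (by rw [hmem]; omega), A2mat, Matrix.of_apply, if_neg (by omega),
          if_pos (by constructor <;> omega)]
        have e0 : (g p : ℕ) + (n - m) - (f p : ℕ) = n - m := by omega
        rw [e0, eco, if_neg (by omega), if_neg (by omega), if_pos le_rfl, if_neg h1, if_pos h2]
      · rw [if_neg h1, if_neg h2] at hfp hgp
        rw [if_pos ((hmem _).mpr (by omega)), B2mat, Matrix.of_apply,
          if_pos (by constructor <;> omega), if_neg h1, if_neg h2]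
  obtain ⟨ε0, hε0, hdet⟩ := det_eq_pm_prod Mx f g hfinj hginj h0
  rw [Finset.prod_congr rfl (fun p _ => hdiag p),
    prod_fin_three K n (by omega) (by omega) _ _ _, one_pow, mul_one] at hdet
  have hna : xv sk (n - m - 1) = MvPolynomial.X anm :=
    xv_eq sk (n - m - 1) (by omega) (by omega) anm hanm
  rw [hna] at hdet
  have hchain : (polyInK sk (Dtilde n m b)).coeff (n - m) = Mx.det := by
    rw [hpoly, hN2, hcoeff]
  rw [hdet] at hchain
  have hnK : n - K = m - s := by omega
  rcases hε0 with h | h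
  · refine ⟨1, Or.inl rfl, ?_⟩
    rw [hchain, h, hnK, one_mul, mul_pow]
    have hsc : (MvPolynomial.C (b 0) : MvPolynomial {i : Fin n // i ≠ sk} ℂ) ^ K
        * MvPolynomial.C (b (n - m)) ^ (m - s)
        = MvPolynomial.C (1 * b (n - m) ^ (m - s) * b 0 ^ (n - m + s)) := by
      rw [← map_pow, ← map_pow, ← map_mul]
      congr 1
      rw [hKdef]
      ring
    linear_combination
      (MvPolynomial.X anm : MvPolynomial {i : Fin n // i ≠ sk} ℂ) ^ (m - s) * hsc
  · refine ⟨-1, Or.inr rfl, ?_⟩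
    rw [hchain, h, hnK, mul_pow]
    have hsc : (MvPolynomial.C (b 0) : MvPolynomial {i : Fin n // i ≠ sk} ℂ) ^ K
        * MvPolynomial.C (b (n - m)) ^ (m - s)
        = -MvPolynomial.C (-1 * b (n - m) ^ (m - s) * b 0 ^ (n - m + s)) := by
      rw [← map_pow, ← map_pow, ← map_mul, ← map_neg]
      congr 1
      rw [hKdef]
      ring
    linear_combination
      -(MvPolynomial.X anm : MvPolynomial {i : Fin n // i ≠ sk} ℂ) ^ (m - s) * hsc

end Case2

/-- (i) For `1 ≤ j ≤ n-m`, the coefficient of `a_jⁿ` in `D̃_m` equals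
`ε·b_jⁿ·(1-b₀/b_j)^j·aₙ^{n-m-j}` for some sign `ε`. (ii) For `1 ≤ s ≤ m-1`, the coefficient
of `a_{n-m+s}^{n-m}` in `D̃_m` equals `ε·b_{n-m}^{m-s}·b₀^{n-m+s}·a_{n-m}^{m-s}`. -/
theorem statement4 (n m : ℕ) (hn : 4 ≤ n) (hm1 : 1 ≤ m) (hm : m ≤ n - 1)
    (b : ℕ → ℂ) (hb0 : ∀ j ≤ n - m, b j ≠ 0)
    (hbinj : ∀ i ≤ n - m, ∀ j ≤ n - m, b i = b j → i = j) :
    (∀ j : ℕ, 1 ≤ j → j ≤ n - m → ∀ jk : Fin n, (jk : ℕ) = j - 1 →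
      ∀ an : {i : Fin n // i ≠ jk}, ((an : Fin n) : ℕ) = n - 1 →
        ∃ ε : ℂ, (ε = 1 ∨ ε = -1) ∧
          (polyInK jk (Dtilde n m b)).coeff n
            = MvPolynomial.C (ε * b j ^ n * (1 - b 0 / b j) ^ j) *
                MvPolynomial.X an ^ (n - m - j)) ∧
    (∀ s : ℕ, 1 ≤ s → s ≤ m - 1 → ∀ sk : Fin n, (sk : ℕ) = n - m + s - 1 →
      ∀ anm : {i : Fin n // i ≠ sk}, ((anm : Fin n) : ℕ) = n - m - 1 →
        ∃ ε : ℂ, (ε = 1 ∨ ε = -1) ∧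
          (polyInK sk (Dtilde n m b)).coeff (n - m)
            = MvPolynomial.C (ε * b (n - m) ^ (m - s) * b 0 ^ (n - m + s)) *
                MvPolynomial.X anm ^ (m - s)) := by
  constructor
  · intro j hj1 hj2 jk hjk an han
    exact case1 n m b hn hm1 hm j hj1 hj2 jk hjk an han (hb0 j hj2)
  · intro s hs1 hs2 sk hsk anm hanm
    exact case2 n m b hn hm1 hm s hs1 hs2 sk hsk anm hanm
end

section
/- Let 2 ≤ m ≤ n−2 and let a⁰ be a point of the set Θ. Then there exist an open neighbourhood U ⊂ ℂⁿ of a⁰, an open neighbourhood V ⊂ ℂ^{n−2} of the point obtained from a⁰ by deleting the coordinates a_{n−m} and aₙ, and complex-analytic functions α, β : V → ℂ such that Θ ∩ U = {a ∈ U : the tuple (a_j)_{j∉{n−m,n}} lies in V, a_{n−m} = α((a_j)_{j∉{n−m,n}}) and aₙ = β((a_j)_{j∉{n−m,n}})}. In particular, near a⁰ the set Θ is a smooth analytic subvariety of ℂⁿ of dimension n−2. -/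
open Polynomial

open Set Metric Topology Filter

/-- Analytic implicit function theorem for a scalar equation. -/
lemma aift {E : Type*} [NormedAddCommGroup E] [NormedSpace ℂ E] [CompleteSpace E]
    (g : E × ℂ → ℂ) (hg : ∀ p, AnalyticAt ℂ g p) {x0 : E} {z0 : ℂ}
    (h0 : g (x0, z0) = 0) {L : (E × ℂ) →L[ℂ] ℂ} (hL : HasFDerivAt g L (x0, z0))
    (hc : L (0, 1) ≠ 0) :
    ∃ (W : Set E) (r : ℝ) (ζ : E → ℂ), IsOpen W ∧ x0 ∈ W ∧ 0 < r ∧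
      (∀ x ∈ W, AnalyticAt ℂ ζ x) ∧ ζ x0 = z0 ∧
      (∀ x ∈ W, ζ x ∈ ball z0 r ∧ g (x, ζ x) = 0) ∧
      (∀ x ∈ W, ∀ z ∈ ball z0 r, g (x, z) = 0 → z = ζ x) := by
  set c := L (0, 1) with hcdef
  have hlin : ∀ u : E, ∀ v : ℂ, L (u, v) = L (u, 0) + v * c := by
    intro u v
    have h1 : (u, v) = (u, (0:ℂ)) + ((0:E), v) := by simp
    have h2 : ((0:E), v) = v • ((0:E), (1:ℂ)) := by simp
    rw [h1, map_add, h2, map_smul]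
    simp [hcdef, smul_eq_mul]
  set L' : (E × ℂ) →L[ℂ] (E × ℂ) := (ContinuousLinearMap.fst ℂ E ℂ).prod L with hL'def
  set M : (E × ℂ) →L[ℂ] (E × ℂ) :=
    (ContinuousLinearMap.fst ℂ E ℂ).prod
      (c⁻¹ • (ContinuousLinearMap.snd ℂ E ℂ -
        L.comp ((ContinuousLinearMap.fst ℂ E ℂ).prod 0))) with hMdef
  have h1 : Function.LeftInverse M L' := by
    intro p
    simp only [hL'def, hMdef, ContinuousLinearMap.prod_apply, ContinuousLinearMap.coe_fst',
      ContinuousLinearMap.smul_apply, ContinuousLinearMap.sub_apply,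
      ContinuousLinearMap.coe_snd', ContinuousLinearMap.comp_apply,
      ContinuousLinearMap.zero_apply]
    refine Prod.ext rfl ?_
    rw [hlin p.1 p.2]
    field_simp
    rw [smul_eq_mul, add_sub_cancel_left, one_div, inv_mul_cancel_left₀ hc]
  have h2 : Function.RightInverse M L' := by
    intro p
    simp only [hL'def, hMdef, ContinuousLinearMap.prod_apply, ContinuousLinearMap.coe_fst',
      ContinuousLinearMap.smul_apply, ContinuousLinearMap.sub_apply,
      ContinuousLinearMap.coe_snd', ContinuousLinearMap.comp_apply,
      ContinuousLinearMap.zero_apply]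
    refine Prod.ext rfl ?_
    rw [hlin p.1 _]
    field_simp
    rw [smul_eq_mul, one_div, mul_inv_cancel_left₀ hc, add_sub_cancel]
  set i : (E × ℂ) ≃L[ℂ] (E × ℂ) := ContinuousLinearEquiv.equivOfInverse L' M h1 h2 with hidef
  have hicoe : (i : (E × ℂ) →L[ℂ] (E × ℂ)) = L' := rfl
  set G : E × ℂ → E × ℂ := fun p => (p.1, g p) with hGdef
  have hGa : AnalyticAt ℂ G (x0, z0) :=
    ((ContinuousLinearMap.fst ℂ E ℂ).analyticAt _).prod (hg _)
  obtain ⟨q, hq⟩ := hGa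
  have hGd : HasFDerivAt G L' (x0, z0) :=
    ((ContinuousLinearMap.fst ℂ E ℂ).hasFDerivAt).prodMk hL
  have hq1 : continuousMultilinearCurryFin1 ℂ (E × ℂ) (E × ℂ) (q 1) = L' :=
    hq.hasFDerivAt.unique hGd
  have hGs : HasStrictFDerivAt G (i : (E × ℂ) →L[ℂ] (E × ℂ)) (x0, z0) := by
    rw [hicoe, ← hq1]; exact hq.hasStrictFDerivAt
  set Φ := hGs.toOpenPartialHomeomorph G with hΦdef
  have hΦcoe : (Φ : E × ℂ → E × ℂ) = G := hGs.toOpenPartialHomeomorph_coe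
  have hsrc : (x0, z0) ∈ Φ.source := hGs.mem_toOpenPartialHomeomorph_source
  have hΦeval : Φ (x0, z0) = (x0, 0) := by
    show (Φ : E × ℂ → E × ℂ) (x0, z0) = _
    rw [hΦcoe, hGdef]; simp [h0]
  have htgt : (x0, (0:ℂ)) ∈ Φ.target := by
    rw [← hΦeval]; exact Φ.map_source hsrc
  have hqΦ : HasFPowerSeriesAt (Φ : E × ℂ → E × ℂ) q (x0, z0) := by rw [hΦcoe]; exact hq
  have hq1' : q 1 = (continuousMultilinearCurryFin1 ℂ (E × ℂ) (E × ℂ)).symm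
      (i : (E × ℂ) →L[ℂ] (E × ℂ)) := by
    rw [hicoe, ← hq1]
    exact ((continuousMultilinearCurryFin1 ℂ (E × ℂ) (E × ℂ)).symm_apply_apply _).symm
  have hsymm : HasFPowerSeriesAt (Φ.symm) (q.leftInv (i) (x0, z0)) (x0, 0) := by
    have := Φ.hasFPowerSeriesAt_symm (i := i) hsrc hqΦ hq1'
    rwa [hΦeval] at this
  have hAs : AnalyticAt ℂ (Φ.symm) (x0, 0) := ⟨_, hsymm⟩
  set ζ : E → ℂ := fun x => (Φ.symm (x, 0)).2 with hζdef
  have hζx0 : ζ x0 = z0 := by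
    have : Φ.symm (x0, 0) = (x0, z0) := by rw [← hΦeval]; exact Φ.left_inv hsrc
    simp [hζdef, this]
  have hζa : AnalyticAt ℂ ζ x0 := by
    have hinl : AnalyticAt ℂ (fun x : E => ((x, (0:ℂ)) : E × ℂ)) x0 := by
      have := (ContinuousLinearMap.inl ℂ E ℂ).analyticAt x0
      exact this
    have h3 : AnalyticAt ℂ (Φ.symm ∘ (fun x : E => ((x, (0:ℂ)) : E × ℂ))) x0 :=
      AnalyticAt.comp (by exact hAs) hinl
    have h3' : AnalyticAt ℂ (fun x : E => Φ.symm (x, 0)) x0 := h3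
    exact ((ContinuousLinearMap.snd ℂ E ℂ).analyticAt _).comp h3
  -- key: for (x,0) in target, Φ.symm (x,0) = (x, ζ x) and g (x, ζ x) = 0
  have hkey : ∀ x : E, (x, (0:ℂ)) ∈ Φ.target → Φ.symm (x, 0) = (x, ζ x) ∧ g (x, ζ x) = 0 := by
    intro x hx
    have h4 : Φ (Φ.symm (x, 0)) = (x, 0) := Φ.right_inv hx
    rw [show Φ (Φ.symm (x,0)) = G (Φ.symm (x,0)) from congrFun hΦcoe _] at h4
    have h5 : (Φ.symm (x, 0)).1 = x := congrArg Prod.fst h4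
    have h6 : g (Φ.symm (x, 0)) = 0 := congrArg Prod.snd h4
    have h7 : Φ.symm (x, 0) = (x, ζ x) := by
      rw [hζdef]; exact Prod.ext h5 rfl
    exact ⟨h7, by rwa [h7] at h6⟩
  obtain ⟨ε, hε, hball⟩ := Metric.isOpen_iff.1 Φ.open_source (x0, z0) hsrc
  set W : Set E := {x | x ∈ ball x0 ε ∧ (x, (0:ℂ)) ∈ Φ.target ∧ AnalyticAt ℂ ζ x ∧
    ζ x ∈ ball z0 ε} with hWdef
  have hWopen : IsOpen W := by
    rw [isOpen_iff_mem_nhds]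
    rintro x ⟨hx1, hx2, hx3, hx4⟩
    have e1 : ∀ᶠ y in 𝓝 x, y ∈ ball x0 ε := isOpen_ball.eventually_mem hx1
    have e2 : ∀ᶠ y in 𝓝 x, (y, (0:ℂ)) ∈ Φ.target := by
      have : ContinuousAt (fun y : E => (y, (0:ℂ))) x :=
        (continuous_id.prodMk continuous_const).continuousAt
      exact this (Φ.open_target.mem_nhds hx2)
    have e3 : ∀ᶠ y in 𝓝 x, AnalyticAt ℂ ζ y := hx3.eventually_analyticAt
    have e4 : ∀ᶠ y in 𝓝 x, ζ y ∈ ball z0 ε := hx3.continuousAt (isOpen_ball.mem_nhds hx4)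
    filter_upwards [e1, e2, e3, e4] with y a b c d
    exact ⟨a, b, c, d⟩
  refine ⟨W, ε, ζ, hWopen, ⟨mem_ball_self hε, htgt, hζa, by rw [hζx0]; exact mem_ball_self hε⟩,
    hε, fun x hx => hx.2.2.1, hζx0, fun x hx => ⟨hx.2.2.2, (hkey x hx.2.1).2⟩, ?_⟩
  intro x hx z hz hgz
  have hmem1 : (x, z) ∈ Φ.source := by
    apply hball
    rw [← ball_prod_same]
    exact ⟨hx.1, hz⟩
  have hmem2 : (x, ζ x) ∈ Φ.source := by
    rw [← (hkey x hx.2.1).1]; exact Φ.map_target hx.2.1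
  have heq : Φ (x, z) = Φ (x, ζ x) := by
    rw [show Φ (x,z) = G (x,z) from congrFun hΦcoe _,
        show Φ (x, ζ x) = G (x, ζ x) from congrFun hΦcoe _]
    simp [hGdef, hgz, (hkey x hx.2.1).2]
  have := Φ.injOn hmem1 hmem2 heq
  exact congrArg Prod.snd this

/-- Two functions continuous at `z` and equal away from `z` agree at `z`. -/
lemma ext_punctured {f g : ℂ → ℂ} {z : ℂ} (hf : ContinuousAt f z) (hg : ContinuousAt g z)
    (h : ∀ w, w ≠ z → f w = g w) : f z = g z := by
  have hne : (𝓝[≠] z).NeBot := Module.punctured_nhds_neBot ℂ ℂ z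
  have h1 : Tendsto f (𝓝[≠] z) (𝓝 (f z)) := hf.continuousWithinAt.tendsto
  have h2 : Tendsto g (𝓝[≠] z) (𝓝 (g z)) := hg.continuousWithinAt.tendsto
  have h3 : f =ᶠ[𝓝[≠] z] g := by
    filter_upwards [self_mem_nhdsWithin] with w hw using h w hw
  exact tendsto_nhds_unique (h1.congr' h3) h2

lemma mult_eq_one {p : ℂ[X]} {z : ℂ} (hp : p ≠ 0) (h1 : p.eval z = 0)
    (h2 : (Polynomial.derivative p).eval z ≠ 0) : p.rootMultiplicity z = 1 := by
  have hroot : p.IsRoot z := h1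
  have hpos : 1 ≤ p.rootMultiplicity z := (Polynomial.rootMultiplicity_pos hp).2 hroot
  have hd := Polynomial.derivative_rootMultiplicity_of_root hroot
  by_contra hne
  have h3 : 1 ≤ (Polynomial.derivative p).rootMultiplicity z := by omega
  have h4 : (Polynomial.derivative p).IsRoot z :=
    (Polynomial.rootMultiplicity_pos' ).1 (by omega) |>.2
  exact h2 h4

lemma deriv_ne_zero_of_mult_one {p : ℂ[X]} {z : ℂ} (hp : Polynomial.derivative p ≠ 0)
    (h : p.rootMultiplicity z = 1) : (Polynomial.derivative p).eval z ≠ 0 := by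
  have hp0 : p ≠ 0 := by rintro rfl; simp at h
  have hroot : p.IsRoot z := (Polynomial.rootMultiplicity_pos hp0).1 (by omega)
  have hd := Polynomial.derivative_rootMultiplicity_of_root hroot
  rw [h] at hd
  intro hcon
  have : 1 ≤ (Polynomial.derivative p).rootMultiplicity z :=
    (Polynomial.rootMultiplicity_pos hp).2 hcon
  omega

lemma mult_ge_two {p : ℂ[X]} {z : ℂ} (hp : Polynomial.derivative p ≠ 0)
    (h1 : p.eval z = 0) (h2 : (Polynomial.derivative p).eval z = 0) :
    2 ≤ p.rootMultiplicity z := by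
  have hp0 : p ≠ 0 := by rintro rfl; simp at hp
  have hpos : 1 ≤ p.rootMultiplicity z := (Polynomial.rootMultiplicity_pos hp0).2 h1
  have hd := Polynomial.derivative_rootMultiplicity_of_root (show p.IsRoot z from h1)
  have : 1 ≤ (Polynomial.derivative p).rootMultiplicity z :=
    (Polynomial.rootMultiplicity_pos hp).2 h2
  omega

/-- A polynomial which factors as `(w-z)^2 * u w` with `u` continuous and `u z ≠ 0`
has root multiplicity exactly 2 at `z`. -/
lemma mult_eq_two {p : ℂ[X]} {z : ℂ} {u : ℂ → ℂ} (hp : p ≠ 0)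
    (hu : ContinuousAt u z) (huz : u z ≠ 0)
    (hfac : ∀ w, p.eval w = (w - z) ^ 2 * u w) :
    p.rootMultiplicity z = 2 := by
  set k := p.rootMultiplicity z with hk
  set q := p /ₘ (X - C z) ^ k with hq
  have hfac2 : (X - C z) ^ k * q = p := Polynomial.pow_mul_divByMonic_rootMultiplicity_eq p z
  have hqz : q.eval z ≠ 0 := Polynomial.eval_divByMonic_pow_rootMultiplicity_ne_zero z hp
  have hqcont : ContinuousAt (fun w => q.eval w) z := q.continuous_aeval.continuousAt
  rcases lt_trichotomy k 2 with hlt | heq | hgt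
  · -- k < 2 : q w = (w-z)^(2-k) * u w off z, limit 0 contradicts q z ≠ 0
    exfalso
    have key : ∀ w, w ≠ z → q.eval w = (w - z) ^ (2 - k) * u w := by
      intro w hw
      have h5 : (w - z) ^ k * q.eval w = (w - z) ^ 2 * u w := by
        rw [← hfac w, ← hfac2]; simp
      have hwz : (w - z) ≠ 0 := sub_ne_zero.2 hw
      have h6 : (w - z) ^ 2 = (w - z) ^ k * (w - z) ^ (2 - k) := by
        rw [← pow_add]; congr 1; omega
      rw [h6, mul_assoc] at h5
      exact mul_left_cancel₀ (pow_ne_zero _ hwz) h5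
    have h7 : q.eval z = (z - z) ^ (2 - k) * u z :=
      ext_punctured hqcont (by fun_prop) key
    rw [sub_self, zero_pow (by omega), zero_mul] at h7
    exact hqz h7
  · exact heq
  · -- k > 2 : u w = (w-z)^(k-2) * q w off z, limit 0 contradicts u z ≠ 0
    exfalso
    have key : ∀ w, w ≠ z → u w = (w - z) ^ (k - 2) * q.eval w := by
      intro w hw
      have h5 : (w - z) ^ k * q.eval w = (w - z) ^ 2 * u w := by
        rw [← hfac w, ← hfac2]; simp
      have hwz : (w - z) ≠ 0 := sub_ne_zero.2 hw
      have h6 : (w - z) ^ k = (w - z) ^ 2 * (w - z) ^ (k - 2) := by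
        rw [← pow_add]; congr 1; omega
      rw [h6, mul_assoc] at h5
      exact (mul_left_cancel₀ (pow_ne_zero _ hwz) h5).symm
    have h7 : u z = (z - z) ^ (k - 2) * q.eval z := by
      have := ext_punctured hu (by fun_prop) key
      exact this
    rw [sub_self, zero_pow (by omega), zero_mul] at h7
    exact huz h7

/-- Tube lemma: a function nonvanishing on `{a0} × K` is nonvanishing on `U × K`. -/
lemma tube {X : Type*} [TopologicalSpace X] {O : Set X} (hO : IsOpen O) {a0 : X} (ha0 : a0 ∈ O)
    {K : Set ℂ} (hK : IsCompact K) (h : X × ℂ → ℝ)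
    (hcont : ∀ p : X × ℂ, p.1 ∈ O → ContinuousAt h p)
    (hpos : ∀ w ∈ K, h (a0, w) ≠ 0) :
    ∃ U : Set X, IsOpen U ∧ a0 ∈ U ∧ U ⊆ O ∧ ∀ a ∈ U, ∀ w ∈ K, h (a, w) ≠ 0 := by
  set S : Set (X × ℂ) := {p | p.1 ∈ O ∧ h p ≠ 0} with hS
  have hSopen : IsOpen S := by
    rw [isOpen_iff_mem_nhds]
    rintro p ⟨hp1, hp2⟩
    have e1 : ∀ᶠ y in 𝓝 p, y.1 ∈ O := (hO.preimage continuous_fst).eventually_mem hp1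
    have e2 : ∀ᶠ y in 𝓝 p, h y ≠ 0 := (hcont p hp1).eventually_ne hp2
    filter_upwards [e1, e2] with y a b using ⟨a, b⟩
  have hsub : ({a0} : Set X) ×ˢ K ⊆ S := by
    rintro ⟨a, w⟩ ⟨ha, hw⟩
    rw [mem_singleton_iff] at ha
    subst ha
    exact ⟨ha0, hpos w hw⟩
  obtain ⟨u, v, hu, hv, hau, hKv, huv⟩ :=
    generalized_tube_lemma isCompact_singleton hK hSopen hsub
  refine ⟨u ∩ O, hu.inter hO, ⟨hau rfl, ha0⟩, inter_subset_right, ?_⟩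
  intro a ha w hw
  exact (huv (⟨ha.1, hKv hw⟩ : (a, w) ∈ u ×ˢ v)).2

lemma Pev_eq (n : ℕ) (a : Fin n → ℂ) :
    Pev n a = X ^ n + ∑ i : Fin n, C (a i) * X ^ (n - 1 - (i : ℕ)) := by
  unfold Pev Pgen
  rw [Polynomial.map_add, Polynomial.map_pow, map_X, Polynomial.map_sum]
  congr 1
  refine Finset.sum_congr rfl fun i _ => ?_
  rw [Polynomial.map_mul, map_C, Polynomial.map_pow, map_X, MvPolynomial.eval_X]

lemma Psev_eq (n m : ℕ) (b : ℕ → ℂ) (a : Fin n → ℂ) :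
    Psev n m b a = C (b 0) * X ^ (n - m) +
      ∑ i : Fin n, if (i : ℕ) < n - m then
        C (b ((i : ℕ) + 1) * a i) * X ^ (n - m - 1 - (i : ℕ)) else 0 := by
  unfold Psev Pstar
  rw [Polynomial.map_add, Polynomial.map_mul, map_C, Polynomial.map_pow, map_X,
    Polynomial.map_sum, MvPolynomial.eval_C]
  congr 1
  refine Finset.sum_congr rfl fun i _ => ?_
  split_ifs with h
  · rw [Polynomial.map_mul, map_C, Polynomial.map_pow, map_X, MvPolynomial.eval_mul,
      MvPolynomial.eval_C, MvPolynomial.eval_X]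
  · exact Polynomial.map_zero _

/-- `k·z^(k-1)`, the derivative of `z^k`. -/
noncomputable def dd (k : ℕ) (z : ℂ) : ℂ := (k : ℂ) * z ^ (k - 1)

noncomputable def pe (n : ℕ) (a : Fin n → ℂ) (z : ℂ) : ℂ :=
  z ^ n + ∑ i : Fin n, a i * z ^ (n - 1 - (i : ℕ))

noncomputable def ped (n : ℕ) (a : Fin n → ℂ) (z : ℂ) : ℂ :=
  dd n z + ∑ i : Fin n, a i * dd (n - 1 - (i : ℕ)) z

noncomputable def ps (n m : ℕ) (b : ℕ → ℂ) (a : Fin n → ℂ) (z : ℂ) : ℂ :=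
  b 0 * z ^ (n - m) +
    ∑ i : Fin n, if (i : ℕ) < n - m then
      b ((i : ℕ) + 1) * a i * z ^ (n - m - 1 - (i : ℕ)) else 0

noncomputable def psd (n m : ℕ) (b : ℕ → ℂ) (a : Fin n → ℂ) (z : ℂ) : ℂ :=
  b 0 * dd (n - m) z +
    ∑ i : Fin n, if (i : ℕ) < n - m then
      b ((i : ℕ) + 1) * a i * dd (n - m - 1 - (i : ℕ)) z else 0

lemma Pev_eval (n : ℕ) (a : Fin n → ℂ) (z : ℂ) : (Pev n a).eval z = pe n a z := by
  rw [Pev_eq]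
  simp [pe, eval_finset_sum]

lemma Psev_eval (n m : ℕ) (b : ℕ → ℂ) (a : Fin n → ℂ) (z : ℂ) :
    (Psev n m b a).eval z = ps n m b a z := by
  rw [Psev_eq]
  simp only [eval_add, eval_mul, eval_C, eval_pow, eval_X, eval_finset_sum, ps]
  congr 1
  refine Finset.sum_congr rfl fun i _ => ?_
  split_ifs with h <;> simp

lemma Pev_deriv_eval (n : ℕ) (a : Fin n → ℂ) (z : ℂ) :
    (Polynomial.derivative (Pev n a)).eval z = ped n a z := by
  rw [Pev_eq, derivative_add, derivative_X_pow, derivative_sum]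
  simp only [eval_add, eval_mul, eval_C, eval_pow, eval_X, eval_finset_sum, ped, dd]
  congr 1
  refine Finset.sum_congr rfl fun i _ => ?_
  rw [derivative_C_mul, derivative_X_pow]
  simp

lemma Psev_deriv_eval (n m : ℕ) (b : ℕ → ℂ) (a : Fin n → ℂ) (z : ℂ) :
    (Polynomial.derivative (Psev n m b a)).eval z = psd n m b a z := by
  rw [Psev_eq, derivative_add, derivative_C_mul, derivative_X_pow, derivative_sum,
    eval_add, eval_finset_sum]
  unfold psd dd
  congr 1
  · simp
  refine Finset.sum_congr rfl fun i _ => ?_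
  rw [apply_ite Polynomial.derivative, map_zero, derivative_C_mul, derivative_X_pow]
  split_ifs with h
  · simp
  · simp

-- degree facts
lemma Pev_sum_degree_lt (n : ℕ) (hn : 1 ≤ n) (a : Fin n → ℂ) :
    (∑ i : Fin n, C (a i) * X ^ (n - 1 - (i : ℕ)) : ℂ[X]).degree < (n : ℕ) := by
  refine lt_of_le_of_lt (Polynomial.degree_sum_le _ _) ?_
  rw [Finset.sup_lt_iff (by exact_mod_cast WithBot.bot_lt_coe n)]
  intro i _
  refine lt_of_le_of_lt (Polynomial.degree_C_mul_X_pow_le _ _) ?_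
  exact_mod_cast Nat.lt_of_le_of_lt (Nat.sub_le _ _) (by omega)

lemma Pev_monic (n : ℕ) (hn : 1 ≤ n) (a : Fin n → ℂ) : (Pev n a).Monic := by
  rw [Pev_eq]
  exact Polynomial.monic_X_pow_add (Pev_sum_degree_lt n hn a)

lemma Pev_ne_zero (n : ℕ) (hn : 1 ≤ n) (a : Fin n → ℂ) : Pev n a ≠ 0 :=
  (Pev_monic n hn a).ne_zero

lemma Pev_degree (n : ℕ) (hn : 1 ≤ n) (a : Fin n → ℂ) : (Pev n a).degree = n := by
  rw [Pev_eq, Polynomial.degree_add_eq_left_of_degree_lt]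
  · exact Polynomial.degree_X_pow n
  · rw [Polynomial.degree_X_pow]; exact Pev_sum_degree_lt n hn a

lemma Pev_deriv_ne_zero (n : ℕ) (hn : 1 ≤ n) (a : Fin n → ℂ) :
    Polynomial.derivative (Pev n a) ≠ 0 := by
  intro h
  have h2 := Polynomial.natDegree_eq_zero_of_derivative_eq_zero h
  have h3 : (Pev n a).natDegree = n := Polynomial.natDegree_eq_of_degree_eq_some (Pev_degree n hn a)
  omega

lemma Psev_sum_degree_lt (n m : ℕ) (hnm : 1 ≤ n - m) (b : ℕ → ℂ) (a : Fin n → ℂ) :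
    (∑ i : Fin n, if (i : ℕ) < n - m then
        C (b ((i : ℕ) + 1) * a i) * X ^ (n - m - 1 - (i : ℕ)) else 0 : ℂ[X]).degree
      < ((n - m : ℕ) : WithBot ℕ) := by
  refine lt_of_le_of_lt (Polynomial.degree_sum_le _ _) ?_
  rw [Finset.sup_lt_iff (by exact_mod_cast WithBot.bot_lt_coe (n - m))]
  intro i _
  split_ifs with h
  · refine lt_of_le_of_lt (Polynomial.degree_C_mul_X_pow_le _ _) ?_
    exact_mod_cast Nat.lt_of_le_of_lt (Nat.sub_le _ _) (by omega)
  · exact lt_of_le_of_lt (by simp [Polynomial.degree_zero]) (by exact_mod_cast WithBot.bot_lt_coe _)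

lemma Psev_degree (n m : ℕ) (hnm : 1 ≤ n - m) (b : ℕ → ℂ) (hb : b 0 ≠ 0) (a : Fin n → ℂ) :
    (Psev n m b a).degree = (n - m : ℕ) := by
  rw [Psev_eq, Polynomial.degree_add_eq_left_of_degree_lt]
  · exact Polynomial.degree_C_mul_X_pow _ hb
  · rw [Polynomial.degree_C_mul_X_pow _ hb]
    exact Psev_sum_degree_lt n m hnm b a

lemma Psev_ne_zero (n m : ℕ) (hnm : 1 ≤ n - m) (b : ℕ → ℂ) (hb : b 0 ≠ 0) (a : Fin n → ℂ) :
    Psev n m b a ≠ 0 := by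
  intro h
  have := Psev_degree n m hnm b hb a
  rw [h, Polynomial.degree_zero] at this
  exact absurd this.symm (by simp)

lemma Psev_deriv_ne_zero (n m : ℕ) (hnm : 1 ≤ n - m) (b : ℕ → ℂ) (hb : b 0 ≠ 0) (a : Fin n → ℂ) :
    Polynomial.derivative (Psev n m b a) ≠ 0 := by
  intro h
  have h2 := Polynomial.natDegree_eq_zero_of_derivative_eq_zero h
  have h3 : (Psev n m b a).natDegree = n - m :=
    Polynomial.natDegree_eq_of_degree_eq_some (Psev_degree n m hnm b hb a)
  omega

lemma Psev_coeff_top (n m : ℕ) (hnm : 1 ≤ n - m) (b : ℕ → ℂ) (a : Fin n → ℂ) :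
    (Psev n m b a).coeff (n - m) = b 0 := by
  rw [Psev_eq, Polynomial.coeff_add,
    Polynomial.coeff_eq_zero_of_degree_lt (Psev_sum_degree_lt n m hnm b a)]
  simp [Polynomial.coeff_C_mul, Polynomial.coeff_X_pow]

lemma Psev_deriv2_ne_zero (n m : ℕ) (hnm : 2 ≤ n - m) (b : ℕ → ℂ) (hb : b 0 ≠ 0) (a : Fin n → ℂ) :
    Polynomial.derivative (Polynomial.derivative (Psev n m b a)) ≠ 0 := by
  intro h
  have h2 : (Polynomial.derivative (Polynomial.derivative (Psev n m b a))).coeff (n - m - 2)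
      = 0 := by rw [h]; simp
  rw [Polynomial.coeff_derivative, Polynomial.coeff_derivative] at h2
  rw [show n - m - 2 + 1 = n - m - 1 by omega, show n - m - 1 + 1 = n - m by omega,
    Psev_coeff_top n m (by omega) b a] at h2
  have c1 : ((n - m - 2 : ℕ) : ℂ) + 1 ≠ 0 := Nat.cast_add_one_ne_zero (n - m - 2)
  have c2 : ((n - m - 1 : ℕ) : ℂ) + 1 ≠ 0 := Nat.cast_add_one_ne_zero (n - m - 1)
  rcases mul_eq_zero.1 h2 with h3 | h3
  · rcases mul_eq_zero.1 h3 with h4 | h4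
    · exact hb h4
    · exact c2 h4
  · exact c1 h3

/-- glue a point of `ℂ^{n-2}` with values `s,t` at positions `inm, iN`. -/
def glue {n : ℕ} (inm iN : Fin n) (x : {j : Fin n // j ≠ inm ∧ j ≠ iN} → ℂ) (s t : ℂ) :
    Fin n → ℂ :=
  fun j => if h1 : j = inm then s else if h2 : j = iN then t else x ⟨j, h1, h2⟩

section Glue
variable {n m : ℕ} {b : ℕ → ℂ} {inm iN : Fin n}
  (hn : 4 ≤ n) (hm2 : 2 ≤ m) (hm : m ≤ n - 2)
  (hinm : (inm : ℕ) = n - m - 1) (hiN : (iN : ℕ) = n - 1)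

include hn hm2 hm hinm hiN

lemma glue_proj_self (a : Fin n → ℂ) :
    glue inm iN (fun j => a j.1) (a inm) (a iN) = a := by
  funext j
  unfold glue
  split_ifs with h1 h2
  · rw [h1]
  · rw [h2]
  · rfl

lemma ps_glue (x : {j : Fin n // j ≠ inm ∧ j ≠ iN} → ℂ) (s t z : ℂ) :
    ps n m b (glue inm iN x s t) z = ps n m b (glue inm iN x 0 0) z + b (n - m) * s := by
  unfold ps
  have key : ∀ i : Fin n,
      (if (i : ℕ) < n - m then b ((i : ℕ) + 1) * (glue inm iN x s t i) *
          z ^ (n - m - 1 - (i : ℕ)) else 0)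
      = (if (i : ℕ) < n - m then b ((i : ℕ) + 1) * (glue inm iN x 0 0 i) *
          z ^ (n - m - 1 - (i : ℕ)) else 0)
        + (if i = inm then b (n - m) * s else 0) := by
    intro i
    by_cases h1 : i = inm
    · subst h1
      have hval : (i : ℕ) < n - m := by omega
      have hexp : n - m - 1 - (i : ℕ) = 0 := by omega
      have hb : (i : ℕ) + 1 = n - m := by omega
      rw [if_pos hval, if_pos hval, if_pos rfl, hexp, hb]
      unfold glue
      rw [dif_pos rfl, dif_pos rfl]
      ring
    · rw [if_neg h1, add_zero]
      by_cases h2 : (i : ℕ) < n - m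
      · rw [if_pos h2, if_pos h2]
        have h3 : i ≠ iN := by
          intro h; rw [h, hiN] at h2; omega
        unfold glue
        rw [dif_neg h1, dif_neg h3, dif_neg h1, dif_neg h3]
      · rw [if_neg h2, if_neg h2]
  rw [Finset.sum_congr rfl (fun i _ => key i), Finset.sum_add_distrib,
    Finset.sum_ite_eq' Finset.univ inm (fun _ => b (n - m) * s)]
  simp only [Finset.mem_univ, if_pos]
  ring

lemma pe_glue (x : {j : Fin n // j ≠ inm ∧ j ≠ iN} → ℂ) (s t z : ℂ) :
    pe n (glue inm iN x s t) z = pe n (glue inm iN x s 0) z + t := by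
  unfold pe
  have key : ∀ i : Fin n,
      glue inm iN x s t i * z ^ (n - 1 - (i : ℕ))
      = glue inm iN x s 0 i * z ^ (n - 1 - (i : ℕ)) + (if i = iN then t else 0) := by
    intro i
    by_cases h2 : i = iN
    · subst h2
      have h1 : i ≠ inm := by
        intro h; rw [h] at hiN; rw [hinm] at hiN; omega
      have hexp : n - 1 - (i : ℕ) = 0 := by omega
      rw [if_pos rfl, hexp]
      unfold glue
      rw [dif_neg h1, dif_pos rfl, dif_neg h1, dif_pos rfl]
      ring
    · rw [if_neg h2, add_zero]
      by_cases h1 : i = inm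
      · subst h1; unfold glue; rw [dif_pos rfl, dif_pos rfl]
      · unfold glue; rw [dif_neg h1, dif_neg h2, dif_neg h1, dif_neg h2]
  rw [Finset.sum_congr rfl (fun i _ => key i), Finset.sum_add_distrib,
    Finset.sum_ite_eq' Finset.univ iN (fun _ => t)]
  simp only [Finset.mem_univ, if_pos]
  ring

lemma psd_glue (x : {j : Fin n // j ≠ inm ∧ j ≠ iN} → ℂ) (s t z : ℂ) :
    psd n m b (glue inm iN x s t) z = psd n m b (glue inm iN x 0 0) z := by
  unfold psd
  congr 1
  refine Finset.sum_congr rfl fun i _ => ?_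
  by_cases h2 : (i : ℕ) < n - m
  · rw [if_pos h2, if_pos h2]
    by_cases h1 : i = inm
    · subst h1
      have hexp : n - m - 1 - (i : ℕ) = 0 := by omega
      rw [hexp]
      simp [dd]
    · have h3 : i ≠ iN := by intro h; rw [h, hiN] at h2; omega
      unfold glue
      rw [dif_neg h1, dif_neg h3, dif_neg h1, dif_neg h3]
  · rw [if_neg h2, if_neg h2]

end Glue

/-! Taylor expansion with explicit quadratic remainder -/

noncomputable def gg : ℕ → ℂ → ℂ → ℂ
  | 0, _, _ => 0
  | (k+1), w, z => w * gg k w z + dd k z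

lemma dd_succ (k : ℕ) (z : ℂ) : dd (k + 1) z = z * dd k z + z ^ k := by
  cases k with
  | zero => simp [dd]
  | succ k =>
    unfold dd
    have e1 : k + 1 + 1 - 1 = k + 1 := by omega
    have e2 : k + 1 - 1 = k := by omega
    rw [e1, e2]
    push_cast
    ring

lemma gg_spec (k : ℕ) (w z : ℂ) :
    w ^ k = z ^ k + dd k z * (w - z) + (w - z) ^ 2 * gg k w z := by
  induction k with
  | zero => simp [dd, gg]
  | succ k ih =>
    rw [pow_succ, ih, dd_succ]
    show _ = _ + _ + (w - z) ^ 2 * (w * gg k w z + dd k z)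
    ring

noncomputable def uu (n m : ℕ) (b : ℕ → ℂ) (a : Fin n → ℂ) (w z : ℂ) : ℂ :=
  b 0 * gg (n - m) w z +
    ∑ i : Fin n, if (i : ℕ) < n - m then
      b ((i : ℕ) + 1) * a i * gg (n - m - 1 - (i : ℕ)) w z else 0

lemma uu_spec (n m : ℕ) (b : ℕ → ℂ) (a : Fin n → ℂ) (w z : ℂ) :
    ps n m b a w = ps n m b a z + psd n m b a z * (w - z) + (w - z) ^ 2 * uu n m b a w z := by
  unfold ps psd uu
  have key : ∀ i : Fin n,
      (if (i : ℕ) < n - m then b ((i : ℕ) + 1) * a i * w ^ (n - m - 1 - (i : ℕ)) else 0)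
      = (if (i : ℕ) < n - m then b ((i : ℕ) + 1) * a i * z ^ (n - m - 1 - (i : ℕ)) else 0)
        + (if (i : ℕ) < n - m then b ((i : ℕ) + 1) * a i * dd (n - m - 1 - (i : ℕ)) z else 0)
            * (w - z)
        + (w - z) ^ 2 *
          (if (i : ℕ) < n - m then b ((i : ℕ) + 1) * a i * gg (n - m - 1 - (i : ℕ)) w z
            else 0) := by
    intro i
    split_ifs with h
    · rw [gg_spec (n - m - 1 - (i : ℕ)) w z]; ring
    · simp
  rw [Finset.sum_congr rfl (fun i _ => key i), Finset.sum_add_distrib, Finset.sum_add_distrib,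
    ← Finset.sum_mul, ← Finset.mul_sum, gg_spec (n - m) w z]
  ring

/-! Root bounds -/

lemma pe_bound {n : ℕ} (hn : 1 ≤ n) (a : Fin n → ℂ) (z : ℂ) (h : pe n a z = 0) :
    ‖z‖ ≤ 1 + ∑ i : Fin n, ‖a i‖ := by
  by_contra hlt
  push_neg at hlt
  have hS : (0:ℝ) ≤ ∑ i : Fin n, ‖a i‖ := Finset.sum_nonneg fun i _ => norm_nonneg _
  have hz1 : (1:ℝ) ≤ ‖z‖ := by linarith
  have h1 : z ^ n = -∑ i : Fin n, a i * z ^ (n - 1 - (i : ℕ)) := by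
    unfold pe at h; linear_combination h
  have h2 : ‖z‖ ^ n ≤ (∑ i : Fin n, ‖a i‖) * ‖z‖ ^ (n - 1) := by
    calc ‖z‖ ^ n = ‖z ^ n‖ := (norm_pow z n).symm
    _ = ‖∑ i : Fin n, a i * z ^ (n - 1 - (i : ℕ))‖ := by rw [h1, norm_neg]
    _ ≤ ∑ i : Fin n, ‖a i * z ^ (n - 1 - (i : ℕ))‖ := norm_sum_le _ _
    _ ≤ ∑ i : Fin n, ‖a i‖ * ‖z‖ ^ (n - 1) := by
        refine Finset.sum_le_sum fun i _ => ?_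
        rw [norm_mul, norm_pow]
        exact mul_le_mul_of_nonneg_left
          (pow_le_pow_right₀ hz1 (by omega)) (norm_nonneg _)
    _ = (∑ i : Fin n, ‖a i‖) * ‖z‖ ^ (n - 1) := by rw [Finset.sum_mul]
  have h3 : ‖z‖ ^ n = ‖z‖ ^ (n - 1) * ‖z‖ := by
    rw [← pow_succ]; congr 1; omega
  have hp : (0:ℝ) < ‖z‖ ^ (n - 1) := pow_pos (by linarith) _
  nlinarith

lemma ps_bound {n m : ℕ} {b : ℕ → ℂ} (hb : b 0 ≠ 0) (hnm : 1 ≤ n - m)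
    (a : Fin n → ℂ) (z : ℂ) (h : ps n m b a z = 0) :
    ‖z‖ ≤ 1 + (∑ i : Fin n, ‖b ((i : ℕ) + 1)‖ * ‖a i‖) / ‖b 0‖ := by
  by_contra hlt
  push_neg at hlt
  have hb0 : (0:ℝ) < ‖b 0‖ := norm_pos_iff.2 hb
  have hS : (0:ℝ) ≤ (∑ i : Fin n, ‖b ((i : ℕ) + 1)‖ * ‖a i‖) / ‖b 0‖ :=
    div_nonneg (Finset.sum_nonneg fun i _ => mul_nonneg (norm_nonneg _) (norm_nonneg _))
      (le_of_lt hb0)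
  have hz1 : (1:ℝ) ≤ ‖z‖ := by linarith
  have h1 : b 0 * z ^ (n - m) = -∑ i : Fin n, (if (i : ℕ) < n - m then
      b ((i : ℕ) + 1) * a i * z ^ (n - m - 1 - (i : ℕ)) else 0) := by
    unfold ps at h; linear_combination h
  have h2 : ‖b 0‖ * ‖z‖ ^ (n - m) ≤
      (∑ i : Fin n, ‖b ((i : ℕ) + 1)‖ * ‖a i‖) * ‖z‖ ^ (n - m - 1) := by
    calc ‖b 0‖ * ‖z‖ ^ (n - m) = ‖b 0 * z ^ (n - m)‖ := by rw [norm_mul, norm_pow]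
    _ = ‖∑ i : Fin n, (if (i : ℕ) < n - m then
          b ((i : ℕ) + 1) * a i * z ^ (n - m - 1 - (i : ℕ)) else 0)‖ := by rw [h1, norm_neg]
    _ ≤ ∑ i : Fin n, ‖(if (i : ℕ) < n - m then
          b ((i : ℕ) + 1) * a i * z ^ (n - m - 1 - (i : ℕ)) else 0)‖ := norm_sum_le _ _
    _ ≤ ∑ i : Fin n, ‖b ((i : ℕ) + 1)‖ * ‖a i‖ * ‖z‖ ^ (n - m - 1) := by
        refine Finset.sum_le_sum fun i _ => ?_
        split_ifs with hc
        · rw [norm_mul, norm_mul, norm_pow]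
          exact mul_le_mul_of_nonneg_left
            (pow_le_pow_right₀ hz1 (by omega))
            (mul_nonneg (norm_nonneg _) (norm_nonneg _))
        · simp only [norm_zero]; positivity
    _ = (∑ i : Fin n, ‖b ((i : ℕ) + 1)‖ * ‖a i‖) * ‖z‖ ^ (n - m - 1) := by
        rw [Finset.sum_mul]
  have h3 : ‖z‖ ^ (n - m) = ‖z‖ ^ (n - m - 1) * ‖z‖ := by
    rw [← pow_succ]; congr 1; omega
  have hp : (0:ℝ) < ‖z‖ ^ (n - m - 1) := pow_pos (by linarith) _
  rw [h3] at h2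
  have h4 : ‖b 0‖ * ‖z‖ ≤ ∑ i : Fin n, ‖b ((i : ℕ) + 1)‖ * ‖a i‖ := by
    refine le_of_mul_le_mul_right ?_ hp
    calc ‖b 0‖ * ‖z‖ * ‖z‖ ^ (n - m - 1) = ‖b 0‖ * (‖z‖ ^ (n - m - 1) * ‖z‖) := by ring
    _ ≤ (∑ i : Fin n, ‖b ((i : ℕ) + 1)‖ * ‖a i‖) * ‖z‖ ^ (n - m - 1) := h2
  have h5 : ‖z‖ ≤ (∑ i : Fin n, ‖b ((i : ℕ) + 1)‖ * ‖a i‖) / ‖b 0‖ := by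
    rw [le_div_iff₀ hb0]; linarith
  linarith

section An
variable {X : Type*} [NormedAddCommGroup X] [NormedSpace ℂ X]

lemma an_dd {Z : X → ℂ} {p : X} (hZ : AnalyticAt ℂ Z p) (k : ℕ) :
    AnalyticAt ℂ (fun q => dd k (Z q)) p := by
  unfold dd
  exact analyticAt_const.mul (hZ.pow _)

lemma an_pe {n : ℕ} {A : X → Fin n → ℂ} {Z : X → ℂ} {p : X}
    (hA : ∀ i, AnalyticAt ℂ (fun q => A q i) p) (hZ : AnalyticAt ℂ Z p) :
    AnalyticAt ℂ (fun q => pe n (A q) (Z q)) p := by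
  unfold pe
  exact (hZ.pow n).add (Finset.analyticAt_fun_sum _ fun i _ => (hA i).mul (hZ.pow _))

lemma an_ped {n : ℕ} {A : X → Fin n → ℂ} {Z : X → ℂ} {p : X}
    (hA : ∀ i, AnalyticAt ℂ (fun q => A q i) p) (hZ : AnalyticAt ℂ Z p) :
    AnalyticAt ℂ (fun q => ped n (A q) (Z q)) p := by
  unfold ped
  exact (an_dd hZ n).add
    (Finset.analyticAt_fun_sum _ fun i _ => (hA i).mul (an_dd hZ _))

lemma an_ps {n m : ℕ} {b : ℕ → ℂ} {A : X → Fin n → ℂ} {Z : X → ℂ} {p : X}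
    (hA : ∀ i, AnalyticAt ℂ (fun q => A q i) p) (hZ : AnalyticAt ℂ Z p) :
    AnalyticAt ℂ (fun q => ps n m b (A q) (Z q)) p := by
  unfold ps
  refine (analyticAt_const.mul (hZ.pow _)).add (Finset.analyticAt_fun_sum _ fun i _ => ?_)
  split_ifs with h
  · exact (analyticAt_const.mul (hA i)).mul (hZ.pow _)
  · exact analyticAt_const

lemma an_psd {n m : ℕ} {b : ℕ → ℂ} {A : X → Fin n → ℂ} {Z : X → ℂ} {p : X}
    (hA : ∀ i, AnalyticAt ℂ (fun q => A q i) p) (hZ : AnalyticAt ℂ Z p) :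
    AnalyticAt ℂ (fun q => psd n m b (A q) (Z q)) p := by
  unfold psd
  refine (analyticAt_const.mul (an_dd hZ _)).add (Finset.analyticAt_fun_sum _ fun i _ => ?_)
  split_ifs with h
  · exact (analyticAt_const.mul (hA i)).mul (an_dd hZ _)
  · exact analyticAt_const

lemma an_gg (k : ℕ) {W Z : X → ℂ} {p : X} (hW : AnalyticAt ℂ W p) (hZ : AnalyticAt ℂ Z p) :
    AnalyticAt ℂ (fun q => gg k (W q) (Z q)) p := by
  induction k with
  | zero => exact analyticAt_const
  | succ k ih =>
    show AnalyticAt ℂ (fun q => W q * gg k (W q) (Z q) + dd k (Z q)) p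
    exact (hW.mul ih).add (an_dd hZ k)

lemma an_uu {n m : ℕ} {b : ℕ → ℂ} {A : X → Fin n → ℂ} {W Z : X → ℂ} {p : X}
    (hA : ∀ i, AnalyticAt ℂ (fun q => A q i) p)
    (hW : AnalyticAt ℂ W p) (hZ : AnalyticAt ℂ Z p) :
    AnalyticAt ℂ (fun q => uu n m b (A q) (W q) (Z q)) p := by
  unfold uu
  refine (analyticAt_const.mul (an_gg _ hW hZ)).add (Finset.analyticAt_fun_sum _ fun i _ => ?_)
  split_ifs with h
  · exact (analyticAt_const.mul (hA i)).mul (an_gg _ hW hZ)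
  · exact analyticAt_const

lemma an_glue_coord {n : ℕ} {inm iN : Fin n}
    {x : X → {j : Fin n // j ≠ inm ∧ j ≠ iN} → ℂ} {s t : X → ℂ} {p : X}
    (hx : ∀ j, AnalyticAt ℂ (fun q => x q j) p) (hs : AnalyticAt ℂ s p)
    (ht : AnalyticAt ℂ t p) (i : Fin n) :
    AnalyticAt ℂ (fun q => glue inm iN (x q) (s q) (t q) i) p := by
  by_cases h1 : i = inm
  · have he : (fun q => glue inm iN (x q) (s q) (t q) i) = s := by
      funext q; unfold glue; rw [dif_pos h1]
    rw [he]; exact hs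
  · by_cases h2 : i = iN
    · have he : (fun q => glue inm iN (x q) (s q) (t q) i) = t := by
        funext q; unfold glue; rw [dif_neg h1, dif_pos h2]
      rw [he]; exact ht
    · have he : (fun q => glue inm iN (x q) (s q) (t q) i) =
          fun q => x q ⟨i, h1, h2⟩ := by
        funext q; unfold glue; rw [dif_neg h1, dif_neg h2]
      rw [he]; exact hx _

end An

lemma an_coord_fst {ι : Type*} [Fintype ι] {Y : Type*} [NormedAddCommGroup Y]
    [NormedSpace ℂ Y] (i : ι) (p : (ι → ℂ) × Y) :
    AnalyticAt ℂ (fun q : (ι → ℂ) × Y => q.1 i) p :=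
  ((ContinuousLinearMap.proj i).comp (ContinuousLinearMap.fst ℂ (ι → ℂ) Y)).analyticAt p

lemma an_pi_coord {ι : Type*} [Fintype ι] (i : ι) (p : ι → ℂ) :
    AnalyticAt ℂ (fun q : ι → ℂ => q i) p := by
  have := (ContinuousLinearMap.proj (R := ℂ) (φ := fun _ : ι => ℂ) i).analyticAt p
  exact this


open Set Metric Topology Polynomial Filter

set_option maxHeartbeats 2000000

/-- Near a point of `Θ`, the set `Θ` is the graph of a pair of analytic
functions expressing `a_{n-m}` and `aₙ` in terms of the remaining `n-2` variables; in
particular it is a smooth analytic subvariety of dimension `n-2`. -/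
theorem statement13 (n m : ℕ) (hn : 4 ≤ n) (hm2 : 2 ≤ m) (hm : m ≤ n - 2)
    (b : ℕ → ℂ) (hb0 : ∀ j ≤ n - m, b j ≠ 0)
    (hbinj : ∀ i ≤ n - m, ∀ j ≤ n - m, b i = b j → i = j)
    (a0 : Fin n → ℂ) (ha0 : a0 ∈ Theta n m b)
    (inm iN : Fin n) (hinm : (inm : ℕ) = n - m - 1) (hiN : (iN : ℕ) = n - 1) :
    ∃ (U : Set (Fin n → ℂ)) (V : Set ({j : Fin n // j ≠ inm ∧ j ≠ iN} → ℂ))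
      (α β : ({j : Fin n // j ≠ inm ∧ j ≠ iN} → ℂ) → ℂ),
      IsOpen U ∧ a0 ∈ U ∧ IsOpen V ∧ (fun j => a0 j.1) ∈ V ∧
      AnalyticOnNhd ℂ α V ∧ AnalyticOnNhd ℂ β V ∧
      Theta n m b ∩ U =
        {a ∈ U | (fun j : {j : Fin n // j ≠ inm ∧ j ≠ iN} => a j.1) ∈ V ∧
          a inm = α (fun j => a j.1) ∧ a iN = β (fun j => a j.1)} := by
  classical
  have hnm2 : 2 ≤ n - m := by omega
  have hn1 : 1 ≤ n := by omega
  have hb00 : b 0 ≠ 0 := hb0 0 (by omega)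
  have hbnm : b (n - m) ≠ 0 := hb0 (n - m) le_rfl
  -- unpack the Theta point
  simp only [Theta, Set.mem_setOf_eq] at ha0
  obtain ⟨z0, hz0P, hz0m2, hz0m1, hPoth0, hPsoth0, hnc0⟩ := ha0
  have hPs0ne : Psev n m b a0 ≠ 0 := Psev_ne_zero n m (by omega) b hb00 a0
  have hPsd0ne : Polynomial.derivative (Psev n m b a0) ≠ 0 :=
    Psev_deriv_ne_zero n m (by omega) b hb00 a0
  have hPsroot : (Psev n m b a0).IsRoot z0 :=
    (Polynomial.rootMultiplicity_pos hPs0ne).1 (by rw [hz0m2]; omega)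
  have hps0 : ps n m b a0 z0 = 0 := by rw [← Psev_eval]; exact hPsroot
  have hpe0 : pe n a0 z0 = 0 := by rw [← Pev_eval]; exact hz0P
  have hmd := Polynomial.derivative_rootMultiplicity_of_root hPsroot
  rw [hz0m2] at hmd
  have hpsd0 : psd n m b a0 z0 = 0 := by
    rw [← Psev_deriv_eval]
    exact (Polynomial.rootMultiplicity_pos hPsd0ne).1 (by omega)
  have hpsdd0 : (Polynomial.derivative (Polynomial.derivative (Psev n m b a0))).eval z0 ≠ 0 := by
    apply deriv_ne_zero_of_mult_one (Psev_deriv2_ne_zero n m hnm2 b hb00 a0)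
    omega
  have hped0 : ped n a0 z0 ≠ 0 := by
    rw [← Pev_deriv_eval]
    exact deriv_ne_zero_of_mult_one (Pev_deriv_ne_zero n hn1 a0) hz0m1
  -- helper: glue reconstruction and independence of psd
  have hg1 : ∀ (a : Fin n → ℂ) (z : ℂ),
      psd n m b (glue inm iN (fun j => a j.1) 0 0) z = psd n m b a z := by
    intro a z
    conv_rhs => rw [← glue_proj_self hn hm2 hm hinm hiN a]
    exact (psd_glue hn hm2 hm hinm hiN _ _ _ _).symm
  have hpsplit : ∀ (a : Fin n → ℂ) (z : ℂ), ps n m b a z =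
      ps n m b (glue inm iN (fun j => a j.1) 0 0) z + b (n - m) * a inm := by
    intro a z
    conv_lhs => rw [← glue_proj_self hn hm2 hm hinm hiN a]
    rw [ps_glue hn hm2 hm hinm hiN]
  have hpesplit : ∀ (a : Fin n → ℂ) (z : ℂ), pe n a z =
      pe n (glue inm iN (fun j => a j.1) (a inm) 0) z + a iN := by
    intro a z
    conv_lhs => rw [← glue_proj_self hn hm2 hm hinm hiN a]
    rw [pe_glue hn hm2 hm hinm hiN]
  -- the implicit function
  set g1 : ({j : Fin n // j ≠ inm ∧ j ≠ iN} → ℂ) × ℂ → ℂ :=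
    fun q => psd n m b (glue inm iN q.1 0 0) q.2 with hg1def
  have han1 : ∀ p, AnalyticAt ℂ g1 p := by
    intro p
    exact an_psd (fun i => an_glue_coord (fun j => an_coord_fst j p)
      analyticAt_const analyticAt_const i) analyticAt_snd
  have h0g : g1 ((fun j => a0 j.1), z0) = 0 := by
    show psd n m b (glue inm iN (fun j => a0 j.1) 0 0) z0 = 0
    rw [hg1 a0 z0]; exact hpsd0
  set L := fderiv ℂ g1 ((fun j => a0 j.1), z0) with hLdef
  have hL : HasFDerivAt g1 L ((fun j => a0 j.1), z0) :=
    (han1 _).differentiableAt.hasFDerivAt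
  have hcurve : HasDerivAt (fun t : ℂ => g1 ((fun j => a0 j.1), t)) (L (0, 1)) z0 := by
    have hgt : HasDerivAt (fun t : ℂ =>
        (((fun j => a0 j.1), t) : ({j : Fin n // j ≠ inm ∧ j ≠ iN} → ℂ) × ℂ)) (0, 1) z0 :=
      (hasDerivAt_const _ _).prodMk (hasDerivAt_id _)
    exact hL.comp_hasDerivAt z0 hgt
  have hpoly : HasDerivAt (fun t : ℂ => g1 ((fun j => a0 j.1), t))
      ((Polynomial.derivative (Polynomial.derivative (Psev n m b a0))).eval z0) z0 := by
    have heq : (fun t : ℂ => g1 ((fun j => a0 j.1), t)) =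
        fun t => (Polynomial.derivative (Psev n m b a0)).eval t := by
      funext t
      show psd n m b (glue inm iN (fun j => a0 j.1) 0 0) t = _
      rw [hg1 a0 t, ← Psev_deriv_eval]
    rw [heq]
    exact Polynomial.hasDerivAt (Polynomial.derivative (Psev n m b a0)) z0
  have hc : L (0, 1) ≠ 0 := by
    rw [hcurve.unique hpoly]; exact hpsdd0
  obtain ⟨W, r, ζ, hWo, hx0W, hrpos, hζan, hζ0, hζprop, hζuniq⟩ :=
    aift g1 han1 h0g hL hc
  -- isolation radius
  obtain ⟨δ, hδ, hδsub⟩ : ∃ δ > 0, ∀ w, dist w z0 < δ → w ≠ z0 →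
      ¬(Psev n m b a0).IsRoot w := by
    have hfin : ({w : ℂ | (Psev n m b a0).IsRoot w} \ {z0}).Finite :=
      (Polynomial.finite_setOf_isRoot hPs0ne).subset diff_subset
    obtain ⟨δ, hδ, hsub⟩ := Metric.isOpen_iff.1 hfin.isClosed.isOpen_compl z0 (by simp)
    refine ⟨δ, hδ, fun w hw hne hroot => ?_⟩
    exact (hsub (mem_ball.2 hw)) ⟨hroot, hne⟩
  set ε := min (δ / 2) r with hεdef
  have hεpos : 0 < ε := lt_min (by linarith) hrpos
  have hεr : ε ≤ r := min_le_right _ _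
  have hεδ : ε < δ := lt_of_le_of_lt (min_le_left _ _) (by linarith)
  have hiso : ∀ w ∈ Metric.closedBall z0 ε, w ≠ z0 → ¬(Psev n m b a0).IsRoot w :=
    fun w hw hne => hδsub w (lt_of_le_of_lt (mem_closedBall.1 hw) hεδ) hne
  -- the factorization at a0
  have hfac0 := Polynomial.pow_mul_divByMonic_rootMultiplicity_eq (Psev n m b a0) z0
  rw [hz0m2] at hfac0
  have hq0z : (Psev n m b a0 /ₘ (X - C z0) ^ 2).eval z0 ≠ 0 := by
    have h := Polynomial.eval_divByMonic_pow_rootMultiplicity_ne_zero z0 hPs0ne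
    rwa [hz0m2] at h
  -- uu at a0 is nonvanishing near z0
  have huq : ∀ w, w ≠ z0 → uu n m b a0 w z0 = (Psev n m b a0 /ₘ (X - C z0) ^ 2).eval w := by
    intro w hw
    have h1 : ps n m b a0 w = (w - z0) ^ 2 * uu n m b a0 w z0 := by
      have h := uu_spec n m b a0 w z0
      rw [hps0, hpsd0] at h
      linear_combination h
    have h2 : ps n m b a0 w = (w - z0) ^ 2 * (Psev n m b a0 /ₘ (X - C z0) ^ 2).eval w := by
      rw [← Psev_eval]
      conv_lhs => rw [← hfac0]
      simp [eval_mul, eval_pow]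
    have h3 := h1.symm.trans h2
    exact mul_left_cancel₀ (pow_ne_zero 2 (sub_ne_zero.2 hw)) h3
  have hucont : ∀ (c : Fin n → ℂ) (z w0 : ℂ), ContinuousAt (fun w : ℂ => uu n m b c w z) w0 := by
    intro c z w0
    exact (an_uu (X := ℂ) (A := fun _ => c) (W := fun w => w) (Z := fun _ => z) (p := w0)
      (fun i => analyticAt_const) analyticAt_id analyticAt_const).continuousAt
  have hu00 : uu n m b a0 z0 z0 = (Psev n m b a0 /ₘ (X - C z0) ^ 2).eval z0 := by
    apply ext_punctured (f := fun w => uu n m b a0 w z0)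
      (g := fun w => (Psev n m b a0 /ₘ (X - C z0) ^ 2).eval w)
    · exact hucont a0 z0 z0
    · exact (Psev n m b a0 /ₘ (X - C z0) ^ 2).continuous.continuousAt
    · exact huq
  have hu0 : ∀ w ∈ Metric.closedBall z0 ε, uu n m b a0 w z0 ≠ 0 := by
    intro w hw
    by_cases hwz : w = z0
    · rw [hwz, hu00]; exact hq0z
    · rw [huq w hwz]
      intro h0'
      apply hiso w hw hwz
      show (Psev n m b a0).eval w = 0
      rw [← hfac0]
      simp [h0']
  -- bounds
  set S1 : ℝ := ∑ i : Fin n, (‖a0 i‖ + 1) with hS1def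
  set S2 : ℝ := ∑ i : Fin n, ‖b ((i : ℕ) + 1)‖ * (‖a0 i‖ + 1) with hS2def
  have hS1nn : 0 ≤ S1 := Finset.sum_nonneg fun i _ => by positivity
  have hS2nn : 0 ≤ S2 := Finset.sum_nonneg fun i _ => by positivity
  have hb0pos : (0:ℝ) < ‖b 0‖ := norm_pos_iff.2 hb00
  set R : ℝ := 1 + S1 + S2 / ‖b 0‖ + (‖z0‖ + ε) with hRdef
  have habound : ∀ a : Fin n → ℂ, a ∈ Metric.ball a0 1 → ∀ i, ‖a i‖ ≤ ‖a0 i‖ + 1 := by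
    intro a ha i
    have h1 : ‖a i - a0 i‖ ≤ ‖a - a0‖ := by
      have := norm_le_pi_norm (a - a0) i
      simpa using this
    have h2 : ‖a - a0‖ < 1 := mem_ball_iff_norm.1 ha
    have h3 : a i = a0 i + (a i - a0 i) := by ring
    calc ‖a i‖ = ‖a0 i + (a i - a0 i)‖ := by rw [← h3]
    _ ≤ ‖a0 i‖ + ‖a i - a0 i‖ := norm_add_le _ _
    _ ≤ ‖a0 i‖ + 1 := by linarith
  have hRpe : ∀ a ∈ Metric.ball a0 1, ∀ w : ℂ, pe n a w = 0 →
      w ∈ Metric.closedBall (0:ℂ) R := by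
    intro a ha w hw
    have h1 := pe_bound hn1 a w hw
    have h2 : ∑ i : Fin n, ‖a i‖ ≤ S1 := Finset.sum_le_sum fun i _ => habound a ha i
    have h3 : 0 ≤ S2 / ‖b 0‖ := div_nonneg hS2nn (le_of_lt hb0pos)
    have h4 : 0 ≤ ‖z0‖ + ε := by positivity
    rw [mem_closedBall, dist_zero_right]
    rw [hRdef]; linarith
  have hRps : ∀ a ∈ Metric.ball a0 1, ∀ w : ℂ, ps n m b a w = 0 →
      w ∈ Metric.closedBall (0:ℂ) R := by
    intro a ha w hw
    have h1 := ps_bound hb00 (by omega) a w hw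
    have h2 : ∑ i : Fin n, ‖b ((i : ℕ) + 1)‖ * ‖a i‖ ≤ S2 :=
      Finset.sum_le_sum fun i _ =>
        mul_le_mul_of_nonneg_left (habound a ha i) (norm_nonneg _)
    have h3 : (∑ i : Fin n, ‖b ((i : ℕ) + 1)‖ * ‖a i‖) / ‖b 0‖ ≤ S2 / ‖b 0‖ := by
      gcongr
    have h4 : 0 ≤ ‖z0‖ + ε := by positivity
    rw [mem_closedBall, dist_zero_right]
    rw [hRdef]; linarith
  have hz0KR : Metric.closedBall z0 ε ⊆ Metric.closedBall (0:ℂ) R := by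
    intro w hw
    rw [mem_closedBall] at hw ⊢
    have h1 : dist w 0 ≤ dist w z0 + dist z0 0 := dist_triangle _ _ _
    have h2 : dist z0 0 = ‖z0‖ := dist_zero_right z0
    have h3 : 0 ≤ S2 / ‖b 0‖ := div_nonneg hS2nn (le_of_lt hb0pos)
    rw [hRdef]; rw [h2] at h1; linarith
  set K := Metric.closedBall (0:ℂ) R \ Metric.ball z0 ε with hKdef
  have hKcomp : IsCompact K := (isCompact_closedBall (0:ℂ) R).diff isOpen_ball
  -- TUBE 1 : P has no multiple roots
  obtain ⟨U1, hU1o, hU1a, -, hU1⟩ := tube isOpen_univ (Set.mem_univ a0)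
      (isCompact_closedBall (0:ℂ) R)
      (fun p : (Fin n → ℂ) × ℂ => ‖pe n p.1 p.2‖ + ‖ped n p.1 p.2‖)
      (fun p _ => ((an_pe (fun i => an_coord_fst i p)
          analyticAt_snd).continuousAt.norm).add
        ((an_ped (fun i => an_coord_fst i p) analyticAt_snd).continuousAt.norm))
      (by
        intro w hw heq
        simp only at heq
        have h1 : pe n a0 w = 0 ∧ ped n a0 w = 0 := by
          constructor
          · rw [← norm_eq_zero]
            nlinarith [norm_nonneg (pe n a0 w), norm_nonneg (ped n a0 w)]
          · rw [← norm_eq_zero]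
            nlinarith [norm_nonneg (pe n a0 w), norm_nonneg (ped n a0 w)]
        have hroot : (Pev n a0).IsRoot w := by
          show (Pev n a0).eval w = 0; rw [Pev_eval]; exact h1.1
        have hm1 : (Pev n a0).rootMultiplicity w = 1 := by
          by_cases hwz : w = z0
          · rw [hwz]; exact hz0m1
          · exact hPoth0 w hwz hroot
        have := deriv_ne_zero_of_mult_one (Pev_deriv_ne_zero n hn1 a0) hm1
        rw [Pev_deriv_eval] at this
        exact this h1.2)
  -- TUBE 2 : P_* has no multiple roots away from z0
  obtain ⟨U2, hU2o, hU2a, -, hU2⟩ := tube isOpen_univ (Set.mem_univ a0) hKcomp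
      (fun p : (Fin n → ℂ) × ℂ => ‖ps n m b p.1 p.2‖ + ‖psd n m b p.1 p.2‖)
      (fun p _ => ((an_ps (fun i => an_coord_fst i p)
          analyticAt_snd).continuousAt.norm).add
        ((an_psd (fun i => an_coord_fst i p) analyticAt_snd).continuousAt.norm))
      (by
        intro w hw heq
        simp only at heq
        have h1 : ps n m b a0 w = 0 ∧ psd n m b a0 w = 0 := by
          constructor <;>
            · rw [← norm_eq_zero]
              nlinarith [norm_nonneg (ps n m b a0 w), norm_nonneg (psd n m b a0 w)]
        have hwz : w ≠ z0 := by
          intro hcon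
          exact hw.2 (by rw [hcon]; exact mem_ball_self hεpos)
        have hroot : (Psev n m b a0).IsRoot w := by
          show (Psev n m b a0).eval w = 0; rw [Psev_eval]; exact h1.1
        have hm1 : (Psev n m b a0).rootMultiplicity w = 1 := hPsoth0 w hwz hroot
        have := deriv_ne_zero_of_mult_one hPsd0ne hm1
        rw [Psev_deriv_eval] at this
        exact this h1.2)
  -- TUBE 3 : no common roots of P, P_* away from z0
  obtain ⟨U3, hU3o, hU3a, -, hU3⟩ := tube isOpen_univ (Set.mem_univ a0) hKcomp
      (fun p : (Fin n → ℂ) × ℂ => ‖pe n p.1 p.2‖ + ‖ps n m b p.1 p.2‖)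
      (fun p _ => ((an_pe (fun i => an_coord_fst i p)
          analyticAt_snd).continuousAt.norm).add
        ((an_ps (fun i => an_coord_fst i p) analyticAt_snd).continuousAt.norm))
      (by
        intro w hw heq
        simp only at heq
        have h1 : pe n a0 w = 0 ∧ ps n m b a0 w = 0 := by
          constructor <;>
            · rw [← norm_eq_zero]
              nlinarith [norm_nonneg (pe n a0 w), norm_nonneg (ps n m b a0 w)]
        have hwz : w ≠ z0 := by
          intro hcon
          exact hw.2 (by rw [hcon]; exact mem_ball_self hεpos)
        refine hnc0 w hwz ⟨?_, ?_⟩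
        · show (Pev n a0).eval w = 0; rw [Pev_eval]; exact h1.1
        · show (Psev n m b a0).eval w = 0; rw [Psev_eval]; exact h1.2)
  -- TUBE 4 : uu is nonvanishing near z0
  have hprojcont : Continuous (fun a : Fin n → ℂ =>
      (fun j => a j.1 : {j : Fin n // j ≠ inm ∧ j ≠ iN} → ℂ)) :=
    continuous_pi fun j => continuous_apply j.1
  have hζproj_an : ∀ a : Fin n → ℂ, (fun j => a j.1) ∈ W →
      AnalyticAt ℂ (fun c : Fin n → ℂ => ζ (fun j => c j.1)) a := by
    intro a ha
    have hpian : AnalyticAt ℂ (fun c : Fin n → ℂ =>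
        (fun j => c j.1 : {j : Fin n // j ≠ inm ∧ j ≠ iN} → ℂ)) a := by
      have := (ContinuousLinearMap.pi (R := ℂ)
        (φ := fun _ : {j : Fin n // j ≠ inm ∧ j ≠ iN} => ℂ)
        (fun j => ContinuousLinearMap.proj j.1)).analyticAt a
      exact this
    have := (hζan _ ha).comp hpian
    exact this
  obtain ⟨U4, hU4o, hU4a, hU4W, hU4⟩ := tube
      (hWo.preimage hprojcont) (show (fun j => a0 j.1) ∈ W from hx0W)
      (isCompact_closedBall z0 ε)
      (fun p : (Fin n → ℂ) × ℂ => ‖uu n m b p.1 p.2 (ζ (fun j => p.1 j.1))‖)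
      (by
        intro p hp
        apply ContinuousAt.norm
        have houter : AnalyticAt ℂ (fun q : (Fin n → ℂ) × ℂ × ℂ =>
            uu n m b q.1 q.2.1 q.2.2) (p.1, p.2, ζ (fun j => p.1 j.1)) := by
          refine an_uu (fun i => an_coord_fst i _) ?_ ?_
          · exact analyticAt_fst.comp analyticAt_snd
          · exact analyticAt_snd.comp analyticAt_snd
        have hinner : ContinuousAt (fun q : (Fin n → ℂ) × ℂ =>
            ((q.1, q.2, ζ (fun j => q.1 j.1)) : (Fin n → ℂ) × ℂ × ℂ)) p := by
          refine continuousAt_fst.prodMk (continuousAt_snd.prodMk ?_)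
          exact ((hζproj_an p.1 hp).continuousAt).comp continuousAt_fst
        exact ContinuousAt.comp (g := fun q : (Fin n → ℂ) × ℂ × ℂ =>
            uu n m b q.1 q.2.1 q.2.2)
          (f := fun q : (Fin n → ℂ) × ℂ =>
            ((q.1, q.2, ζ fun j => q.1 j.1) : (Fin n → ℂ) × ℂ × ℂ))
          houter.continuousAt hinner)
      (by
        intro w hw
        show ‖uu n m b a0 w (ζ fun j => a0 j.1)‖ ≠ 0
        rw [hζ0]
        exact norm_ne_zero_iff.2 (hu0 w hw))
  -- the graph functions
  set α : ({j : Fin n // j ≠ inm ∧ j ≠ iN} → ℂ) → ℂ :=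
    fun x => -(b (n - m))⁻¹ * ps n m b (glue inm iN x 0 0) (ζ x) with hαdef
  set β : ({j : Fin n // j ≠ inm ∧ j ≠ iN} → ℂ) → ℂ :=
    fun x => -pe n (glue inm iN x (α x) 0) (ζ x) with hβdef
  -- the target neighbourhoods
  set V : Set ({j : Fin n // j ≠ inm ∧ j ≠ iN} → ℂ) :=
    {x | x ∈ W ∧ ζ x ∈ Metric.ball z0 ε} with hVdef
  have hVo : IsOpen V := by
    rw [isOpen_iff_mem_nhds]
    rintro x ⟨hx1, hx2⟩
    filter_upwards [hWo.eventually_mem hx1,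
      (hζan x hx1).continuousAt (isOpen_ball.mem_nhds hx2)] with y h1 h2 using ⟨h1, h2⟩
  have hx0V : (fun j => a0 j.1) ∈ V := ⟨hx0W, by rw [hζ0]; exact mem_ball_self hεpos⟩
  have hαan : AnalyticOnNhd ℂ α V := by
    intro x hx
    exact analyticAt_const.mul
      (an_ps (fun i => an_glue_coord (fun j => an_pi_coord j x)
        analyticAt_const analyticAt_const i) (hζan x hx.1))
  have hβan : AnalyticOnNhd ℂ β V := by
    intro x hx
    exact (an_pe (fun i => an_glue_coord (fun j => an_pi_coord j x)
      (hαan x hx) analyticAt_const i) (hζan x hx.1)).neg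
  set Uped : Set (Fin n → ℂ) :=
    {a | (fun j => a j.1) ∈ W ∧ ped n a (ζ (fun j => a j.1)) ≠ 0} with hUpeddef
  have hUpedo : IsOpen Uped := by
    rw [isOpen_iff_mem_nhds]
    rintro a ⟨ha1, ha2⟩
    have hcont : ContinuousAt (fun c : Fin n → ℂ => ped n c (ζ (fun j => c j.1))) a :=
      (an_ped (fun i => an_pi_coord i a) (hζproj_an a ha1)).continuousAt
    filter_upwards [(hWo.preimage hprojcont).eventually_mem ha1, hcont.eventually_ne ha2]
      with y h1 h2 using ⟨h1, h2⟩
  have ha0Uped : a0 ∈ Uped := by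
    refine ⟨hx0W, ?_⟩
    rw [hζ0]
    exact hped0
  -- the neighbourhood U
  set U : Set (Fin n → ℂ) := Metric.ball a0 1 ∩
    ((fun a : Fin n → ℂ => (fun j => a j.1 : {j : Fin n // j ≠ inm ∧ j ≠ iN} → ℂ)) ⁻¹' V)
    ∩ U1 ∩ U2 ∩ U3 ∩ U4 ∩ Uped with hUdef
  have hUo : IsOpen U := ((((((isOpen_ball.inter (hVo.preimage hprojcont)).inter
    hU1o).inter hU2o).inter hU3o).inter hU4o).inter hUpedo)
  have ha0U : a0 ∈ U :=
    ⟨⟨⟨⟨⟨⟨mem_ball_self one_pos, hx0V⟩, hU1a⟩, hU2a⟩, hU3a⟩, hU4a⟩, ha0Uped⟩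
  refine ⟨U, V, α, β, hUo, ha0U, hVo, hx0V, hαan, hβan, ?_⟩
  -- the set identity
  ext a
  simp only [Set.mem_inter_iff, Set.mem_setOf_eq, Theta]
  constructor
  · rintro ⟨⟨z, hzP, hzm2, hzm1, hPoth, hPsoth, hnc⟩, haU⟩
    obtain ⟨⟨⟨⟨⟨⟨haball, haV⟩, haU1⟩, haU2⟩, haU3⟩, haU4⟩, haUped⟩ := haU
    have hane : Psev n m b a ≠ 0 := Psev_ne_zero n m (by omega) b hb00 a
    have hadne : Polynomial.derivative (Psev n m b a) ≠ 0 :=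
      Psev_deriv_ne_zero n m (by omega) b hb00 a
    have hpez : pe n a z = 0 := by rw [← Pev_eval]; exact hzP
    have hroots : (Psev n m b a).IsRoot z :=
      (Polynomial.rootMultiplicity_pos hane).1 (by rw [hzm2]; omega)
    have hpsz : ps n m b a z = 0 := by rw [← Psev_eval]; exact hroots
    have hmd2 := Polynomial.derivative_rootMultiplicity_of_root hroots
    rw [hzm2] at hmd2
    have hpsdz : psd n m b a z = 0 := by
      rw [← Psev_deriv_eval]
      exact (Polynomial.rootMultiplicity_pos hadne).1 (by omega)
    -- locate z
    have hzR : z ∈ Metric.closedBall (0:ℂ) R := hRpe a haball z hpez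
    have hznK : z ∉ K := by
      intro hzK
      exact hU3 a haU3 z hzK (by rw [hpez, hpsz]; simp)
    have hzball : z ∈ Metric.ball z0 ε := by
      by_contra hcon
      exact hznK ⟨hzR, hcon⟩
    -- identify z with ζ
    have hzζ : z = ζ (fun j => a j.1) := by
      apply hζuniq _ haV.1 z (mem_of_mem_of_subset hzball (ball_subset_ball hεr))
      show psd n m b (glue inm iN (fun j => a j.1) 0 0) z = 0
      rw [hg1 a z]; exact hpsdz
    -- solve for the two coordinates
    have hainm : a inm = α (fun j => a j.1) := by
      have h1 := hpsplit a z
      rw [hpsz] at h1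
      rw [hαdef]
      show a inm = -(b (n - m))⁻¹ * ps n m b (glue inm iN (fun j => a j.1) 0 0)
        (ζ (fun j => a j.1))
      rw [← hzζ]
      field_simp
      linear_combination -h1
    have haiN : a iN = β (fun j => a j.1) := by
      have h1 := hpesplit a z
      rw [hpez] at h1
      rw [hβdef]
      show a iN = -pe n (glue inm iN (fun j => a j.1) (α (fun j => a j.1)) 0)
        (ζ (fun j => a j.1))
      rw [← hzζ, ← hainm]
      linear_combination -h1
    exact ⟨⟨⟨⟨⟨⟨⟨haball, haV⟩, haU1⟩, haU2⟩, haU3⟩, haU4⟩, haUped⟩, haV, hainm, haiN⟩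
  · rintro ⟨haU, haV, hainm, haiN⟩
    obtain ⟨⟨⟨⟨⟨⟨haball, -⟩, haU1⟩, haU2⟩, haU3⟩, haU4⟩, haUped⟩ := haU
    refine ⟨?_, ⟨⟨⟨⟨⟨⟨haball, haV⟩, haU1⟩, haU2⟩, haU3⟩, haU4⟩, haUped⟩⟩
    set x : {j : Fin n // j ≠ inm ∧ j ≠ iN} → ℂ := fun j => a j.1 with hxdef
    set z : ℂ := ζ x with hzdef
    have hxW : x ∈ W := haV.1
    have hzball : z ∈ Metric.ball z0 ε := haV.2
    have hzr : g1 (x, z) = 0 := (hζprop x hxW).2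
    have hane : Psev n m b a ≠ 0 := Psev_ne_zero n m (by omega) b hb00 a
    have hadne : Polynomial.derivative (Psev n m b a) ≠ 0 :=
      Psev_deriv_ne_zero n m (by omega) b hb00 a
    -- the three equations at z
    have hpsdz : psd n m b a z = 0 := by rw [← hg1 a z]; exact hzr
    have hpsz : ps n m b a z = 0 := by
      have h1 := hpsplit a z
      rw [hainm, hαdef] at h1
      show ps n m b a z = 0
      rw [h1]
      show ps n m b (glue inm iN x 0 0) z +
        b (n - m) * (-(b (n - m))⁻¹ * ps n m b (glue inm iN x 0 0) (ζ x)) = 0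
      rw [← hzdef]
      field_simp
      ring
    have hpez : pe n a z = 0 := by
      have h1 := hpesplit a z
      rw [hainm, haiN, hβdef] at h1
      rw [h1]
      show pe n (glue inm iN x (α x) 0) z + -pe n (glue inm iN x (α x) 0) (ζ x) = 0
      rw [← hzdef]
      ring
    -- uu nonvanishing at relevant points
    have huu : ∀ w ∈ Metric.closedBall z0 ε, uu n m b a w z ≠ 0 := by
      intro w hw
      have := hU4 a haU4 w hw
      rwa [norm_ne_zero_iff] at this
    have hfaca : ∀ w : ℂ, (Psev n m b a).eval w = (w - z) ^ 2 * uu n m b a w z := by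
      intro w
      rw [Psev_eval]
      have h := uu_spec n m b a w z
      rw [hpsz, hpsdz] at h
      linear_combination h
    refine ⟨z, ?_, ?_, ?_, ?_, ?_, ?_⟩
    · show (Pev n a).eval z = 0
      rw [Pev_eval]; exact hpez
    · -- multiplicity two for P_*
      refine mult_eq_two hane (hucont a z z) ?_ hfaca
      · exact huu z (mem_of_mem_of_subset hzball ball_subset_closedBall)
    · -- multiplicity one for P at z
      refine mult_eq_one (Pev_ne_zero n hn1 a) (by rw [Pev_eval]; exact hpez) ?_
      rw [Pev_deriv_eval]
      exact haUped.2
    · -- other roots of P are simple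
      intro w hwz hwroot
      have hpew : pe n a w = 0 := by rw [← Pev_eval]; exact hwroot
      refine mult_eq_one (Pev_ne_zero n hn1 a) (by rw [Pev_eval]; exact hpew) ?_
      rw [Pev_deriv_eval]
      intro hcon
      exact hU1 a haU1 w (hRpe a haball w hpew) (by rw [hpew, hcon]; simp)
    · -- other roots of P_* are simple
      intro w hwz hwroot
      have hpsw : ps n m b a w = 0 := by rw [← Psev_eval]; exact hwroot
      refine mult_eq_one hane (by rw [Psev_eval]; exact hpsw) ?_
      rw [Psev_deriv_eval]
      intro hcon
      have hwK : w ∉ K := by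
        intro hwK
        exact hU2 a haU2 w hwK (by rw [hpsw, hcon]; simp)
      have hwball : w ∈ Metric.ball z0 ε := by
        by_contra hcon2
        exact hwK ⟨hRps a haball w hpsw, hcon2⟩
      have huw := huu w (mem_of_mem_of_subset hwball ball_subset_closedBall)
      have h5 : (w - z) ^ 2 * uu n m b a w z = 0 := by
        rw [← hfaca, Psev_eval]; exact hpsw
      rcases mul_eq_zero.1 h5 with h6 | h6
      · exact hwz (by
          have := pow_eq_zero_iff (n := 2) (by norm_num) |>.1 h6
          exact sub_eq_zero.1 this)
      · exact huw h6
    · -- no other common roots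
      intro w hwz hcom
      have hpew : pe n a w = 0 := by rw [← Pev_eval]; exact hcom.1
      have hpsw : ps n m b a w = 0 := by rw [← Psev_eval]; exact hcom.2
      have hwK : w ∉ K := by
        intro hwK
        exact hU3 a haU3 w hwK (by rw [hpew, hpsw]; simp)
      have hwball : w ∈ Metric.ball z0 ε := by
        by_contra hcon2
        exact hwK ⟨hRpe a haball w hpew, hcon2⟩
      have huw := huu w (mem_of_mem_of_subset hwball ball_subset_closedBall)
      have h5 : (w - z) ^ 2 * uu n m b a w z = 0 := by
        rw [← hfaca, Psev_eval]; exact hpsw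
      rcases mul_eq_zero.1 h5 with h6 | h6
      · exact hwz (by
          have := pow_eq_zero_iff (n := 2) (by norm_num) |>.1 h6
          exact sub_eq_zero.1 this)
      · exact huw h6
end

section
/- Let m = n−2 (so P_* = b₀x² + b₁a₁x + b₂a₂). With respect to the weighting that assigns to the variable a_j the weight j (j = 1,…,n): (i) the polynomial D̃_{n−2,1} is quasi-homogeneous of weight n(3n−2); (ii) the polynomial D̃_{n−2,2} is quasi-homogeneous of weight 2n(n−1); (iii) for k = 1 and k = 2, the polynomial B_{n−2,k} := Res(P_{n−2,k}, ∂P_{n−2,k}/∂x) is quasi-homogeneous of weight n(n−1). Here quasi-homogeneous of weight W means that every monomial a₁^{α₁}⋯aₙ^{αₙ} occurring with nonzero coefficient satisfies Σ_j j·α_j = W. -/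
open Polynomial

namespace St18

open MvPolynomial

variable {n : ℕ}

/-- The weight function `a_j ↦ j`. -/
def wg (n : ℕ) : Fin n → ℤ := fun j => ((j : ℕ) : ℤ) + 1

/-- The weight function on the remaining variables. -/
def wg' (n : ℕ) (k : Fin n) : {j : Fin n // j ≠ k} → ℤ := fun j => (((j : Fin n) : ℕ) : ℤ) + 1

lemma hom_congr {σ : Type*} {w : σ → ℤ} {p : MvPolynomial σ ℂ} {W W' : ℤ}
    (h : p.IsWeightedHomogeneous w W) (e : W = W') : p.IsWeightedHomogeneous w W' := e ▸ h

lemma det_hom {σ : Type*} {N : ℕ} (w : σ → ℤ) (M : Matrix (Fin N) (Fin N) (MvPolynomial σ ℂ))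
    (r c : Fin N → ℤ) (h : ∀ i j, (M i j).IsWeightedHomogeneous w (r i + c j)) :
    M.det.IsWeightedHomogeneous w (∑ i, (r i + c i)) := by
  rw [Matrix.det_apply, ← mem_weightedHomogeneousSubmodule ℂ]
  apply Submodule.sum_mem
  intro σ' _
  rw [Units.smul_def]
  apply zsmul_mem
  have hp := MvPolynomial.IsWeightedHomogeneous.prod (w := w) Finset.univ
    (fun i => M (σ' i) i) (fun i => r (σ' i) + c i) (fun i _ => h (σ' i) i)
  refine hom_congr hp ?_
  rw [Finset.sum_add_distrib, Finset.sum_add_distrib, Equiv.sum_comp σ' r]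

lemma sum_ite_const (N₁ N₂ : ℕ) (A B : ℤ) :
    (∑ i : Fin (N₁ + N₂), if (i : ℕ) < N₁ then A else B) = N₁ * A + N₂ * B := by
  rw [Fin.sum_univ_eq_sum_range (fun i => if i < N₁ then A else B) (N₁ + N₂)]
  rw [Finset.range_eq_Ico,
    ← Finset.sum_Ico_consecutive _ (Nat.zero_le N₁) (Nat.le_add_right N₁ N₂)]
  have h1 : ∀ i ∈ Finset.Ico 0 N₁, (if i < N₁ then A else B) = A :=
    fun i hi => if_pos (Finset.mem_Ico.mp hi).2
  have h2 : ∀ i ∈ Finset.Ico N₁ (N₁ + N₂), (if i < N₁ then A else B) = B :=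
    fun i hi => if_neg (by have := (Finset.mem_Ico.mp hi).1; omega)
  rw [Finset.sum_congr rfl h1, Finset.sum_congr rfl h2, Finset.sum_const, Finset.sum_const,
    Nat.card_Ico, Nat.card_Ico]
  simp only [Nat.sub_zero, Nat.add_sub_cancel_left, nsmul_eq_mul]

lemma coeff_hom_Pgen (n e : ℕ) :
    ((Pgen n).coeff e).IsWeightedHomogeneous (wg n) ((n : ℤ) - e) := by
  unfold Pgen
  rw [Polynomial.coeff_add, Polynomial.finset_sum_coeff]
  apply MvPolynomial.IsWeightedHomogeneous.add
  · rw [Polynomial.coeff_X_pow]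
    split_ifs with h
    · exact hom_congr (isWeightedHomogeneous_one ℂ (wg n)) (by rw [h]; ring)
    · exact isWeightedHomogeneous_zero ℂ (wg n) _
  · apply MvPolynomial.IsWeightedHomogeneous.sum
    intro i _
    rw [Polynomial.coeff_C_mul, Polynomial.coeff_X_pow, mul_ite, mul_one, mul_zero]
    split_ifs with h
    · refine hom_congr (isWeightedHomogeneous_X ℂ (wg n) i) ?_
      have hi : (i : ℕ) < n := i.isLt
      subst h
      simp only [wg]
      omega
    · exact isWeightedHomogeneous_zero ℂ (wg n) _

lemma coeff_hom_Pstar (n m : ℕ) (b : ℕ → ℂ) (e : ℕ) :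
    ((Pstar n m b).coeff e).IsWeightedHomogeneous (wg n) (((n - m : ℕ) : ℤ) - e) := by
  unfold Pstar
  rw [Polynomial.coeff_add, Polynomial.coeff_C_mul, Polynomial.coeff_X_pow,
    Polynomial.finset_sum_coeff, mul_ite, mul_one, mul_zero]
  apply MvPolynomial.IsWeightedHomogeneous.add
  · split_ifs with h
    · exact hom_congr (isWeightedHomogeneous_C (wg n) _) (by rw [h]; ring)
    · exact isWeightedHomogeneous_zero ℂ (wg n) _
  · apply MvPolynomial.IsWeightedHomogeneous.sum
    intro i _
    by_cases hi : (i : ℕ) < n - m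
    · rw [if_pos hi, Polynomial.coeff_C_mul, Polynomial.coeff_X_pow, mul_ite, mul_one, mul_zero]
      split_ifs with he
      · refine hom_congr ((isWeightedHomogeneous_C (wg n) (b ((i : ℕ) + 1))).mul
          (isWeightedHomogeneous_X ℂ (wg n) i)) ?_
        subst he
        simp only [wg]
        omega
      · exact isWeightedHomogeneous_zero ℂ (wg n) _
    · rw [if_neg hi, Polynomial.coeff_zero]
      exact isWeightedHomogeneous_zero ℂ (wg n) _

lemma coeff_hom_Pmk (n m : ℕ) (hmn : m ≤ n) (b : ℕ → ℂ) (k e : ℕ) :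
    ((Pmk n m b k).coeff e).IsWeightedHomogeneous (wg n) ((n : ℤ) - e) := by
  unfold Pmk
  rw [Polynomial.coeff_sub, Polynomial.coeff_C_mul, Polynomial.coeff_X_pow_mul']
  rw [← mem_weightedHomogeneousSubmodule ℂ]
  apply Submodule.sub_mem
  · rw [mem_weightedHomogeneousSubmodule]
    exact hom_congr ((isWeightedHomogeneous_C (wg n) _).mul (coeff_hom_Pgen n e)) (zero_add _)
  · rw [mem_weightedHomogeneousSubmodule]
    split_ifs with h
    · exact hom_congr (coeff_hom_Pstar n m b (e - m)) (by omega)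
    · exact isWeightedHomogeneous_zero ℂ (wg n) _

lemma coeff_hom_deriv {σ : Type*} (w : σ → ℤ) (f : Polynomial (MvPolynomial σ ℂ)) (A B : ℤ)
    (hf : ∀ e : ℕ, (f.coeff e).IsWeightedHomogeneous w (A - B * e)) (e : ℕ) :
    ((Polynomial.derivative f).coeff e).IsWeightedHomogeneous w (A - B * ((e : ℤ) + 1)) := by
  rw [Polynomial.coeff_derivative]
  have h1 : ((e : MvPolynomial σ ℂ) + 1) = MvPolynomial.C ((e : ℂ) + 1) := by
    simp [map_add, map_one, map_natCast]
  rw [h1]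
  refine hom_congr ((hf (e + 1)).mul (isWeightedHomogeneous_C w _)) ?_
  push_cast
  ring

lemma res_hom {σ : Type*} (w : σ → ℤ) (f : Polynomial (MvPolynomial σ ℂ)) (A B : ℤ) (d : ℕ)
    (hd : 1 ≤ d) (hf : ∀ e : ℕ, (f.coeff e).IsWeightedHomogeneous w (A - B * e)) :
    (res f (Polynomial.derivative f) d (d - 1)).IsWeightedHomogeneous w
      (((d : ℤ) - 1) * (A - B * d) + d * (A - B)) := by
  unfold res
  have h := det_hom w (sylv f (Polynomial.derivative f) d (d - 1))
      (fun i => if (i : ℕ) < d - 1 then A - B * d - B * (i : ℕ) else A - B - B * (i : ℕ))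
      (fun j => B * ((j : ℕ) : ℤ)) ?_
  · refine hom_congr h ?_
    have hcongr : ∀ i : Fin ((d - 1) + d),
        ((if (i : ℕ) < d - 1 then A - B * d - B * (i : ℕ) else A - B - B * (i : ℕ))
          + B * ((i : ℕ) : ℤ)) = (if (i : ℕ) < d - 1 then A - B * d else A - B) := by
      intro i; split_ifs <;> ring
    rw [Finset.sum_congr rfl (fun i _ => hcongr i), sum_ite_const (d - 1) d (A - B * d) (A - B)]
    have hc : ((d - 1 : ℕ) : ℤ) = (d : ℤ) - 1 := by omega
    rw [hc]
  · intro i j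
    dsimp only [sylv, Matrix.of_apply]
    split_ifs with h1 h2 h3
    · refine hom_congr (hf (d + (i : ℕ) - (j : ℕ))) ?_
      have hc : ((d + (i : ℕ) - (j : ℕ) : ℕ) : ℤ) = (d : ℤ) + (i : ℕ) - (j : ℕ) := by omega
      rw [hc]; ring
    · exact isWeightedHomogeneous_zero ℂ w _
    · refine hom_congr (coeff_hom_deriv w f A B hf ((i : ℕ) - (j : ℕ))) ?_
      have hc : (((i : ℕ) - (j : ℕ) : ℕ) : ℤ) = ((i : ℕ) : ℤ) - ((j : ℕ) : ℤ) := by omega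
      rw [hc]; ring
    · exact isWeightedHomogeneous_zero ℂ w _

lemma Dtilde_hom (n : ℕ) (hn : 4 ≤ n) (b : ℕ → ℂ) :
    (Dtilde n (n - 2) b).IsWeightedHomogeneous (wg n) (2 * (n : ℤ)) := by
  unfold Dtilde res
  rw [show n - (n - 2) = 2 by omega]
  have h := det_hom (wg n) (sylv (Pgen n) (Pstar n (n - 2) b) n 2)
      (fun i => if (i : ℕ) < 2 then -(((i : ℕ) : ℤ)) else 2 - ((i : ℕ) : ℤ))
      (fun j => ((j : ℕ) : ℤ)) ?_
  · refine hom_congr h ?_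
    have hcongr : ∀ i : Fin (2 + n),
        ((if (i : ℕ) < 2 then -(((i : ℕ) : ℤ)) else 2 - ((i : ℕ) : ℤ)) + ((i : ℕ) : ℤ)) =
          (if (i : ℕ) < 2 then (0 : ℤ) else 2) := by
      intro i; split_ifs <;> ring
    rw [Finset.sum_congr rfl (fun i _ => hcongr i), sum_ite_const 2 n 0 2]
    push_cast
    ring
  · intro i j
    dsimp only [sylv, Matrix.of_apply]
    split_ifs with h1 h2 h3
    · refine hom_congr (coeff_hom_Pgen n (n + (i : ℕ) - (j : ℕ))) ?_
      omega
    · exact isWeightedHomogeneous_zero ℂ (wg n) _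
    · refine hom_congr (coeff_hom_Pstar n (n - 2) b ((i : ℕ) - (j : ℕ))) ?_
      have h5 : n - (n - 2) = 2 := by omega
      omega
    · exact isWeightedHomogeneous_zero ℂ (wg n) _

/-- `polyInK` as an algebra homomorphism. -/
noncomputable def polyInKHom (k : Fin n) :
    MvPolynomial (Fin n) ℂ →ₐ[ℂ] Polynomial (MvPolynomial {j : Fin n // j ≠ k} ℂ) :=
  (MvPolynomial.optionEquivLeft ℂ {j : Fin n // j ≠ k}).toAlgHom.comp
    (MvPolynomial.rename (Equiv.optionSubtypeNe k).symm)

lemma polyInK_eq (k : Fin n) (q : MvPolynomial (Fin n) ℂ) : polyInK k q = polyInKHom k q := rfl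

lemma polyInKHom_X (k : Fin n) (j : Fin n) :
    polyInKHom k (MvPolynomial.X j) =
      if h : j = k then Polynomial.X
      else Polynomial.C (MvPolynomial.X (⟨j, h⟩ : {j : Fin n // j ≠ k})) := by
  simp only [polyInKHom, AlgHom.comp_apply, AlgEquiv.toAlgHom_eq_coe, AlgHom.coe_coe, rename_X]
  by_cases h : j = k
  · subst h
    rw [Equiv.optionSubtypeNe_symm_self, dif_pos rfl]
    exact optionEquivLeft_X_none _ _
  · rw [Equiv.optionSubtypeNe_symm_of_ne h, dif_neg h]
    exact optionEquivLeft_X_some _ _ _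

lemma polyInKHom_C (k : Fin n) (c : ℂ) :
    polyInKHom k (MvPolynomial.C c) = Polynomial.C (MvPolynomial.C c) := by
  simp only [polyInKHom, AlgHom.comp_apply, AlgEquiv.toAlgHom_eq_coe, AlgHom.coe_coe, rename_C,
    optionEquivLeft_C]
  exact optionEquivLeft_C _ _ c

lemma polyInKHom_monomial (k : Fin n) (d : Fin n →₀ ℕ) (c : ℂ) :
    polyInKHom k (MvPolynomial.monomial d c) =
      Polynomial.C (MvPolynomial.monomial (d.subtypeDomain (· ≠ k)) c) *
        Polynomial.X ^ (d k) := by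
  induction d using Finsupp.induction with
  | zero =>
    rw [MvPolynomial.monomial_zero']
    simp [polyInKHom_C, Finsupp.subtypeDomain_zero, MvPolynomial.monomial_zero']
  | single_add a e d' ha' he ih =>
    have key : (MvPolynomial.monomial (Finsupp.single a e + d') c : MvPolynomial (Fin n) ℂ) =
        MvPolynomial.X a ^ e * MvPolynomial.monomial d' c := by
      rw [MvPolynomial.X_pow_eq_monomial, MvPolynomial.monomial_mul, one_mul]
    rw [key, map_mul, map_pow, polyInKHom_X, ih]
    by_cases h : a = k
    · subst h
      rw [dif_pos rfl]
      have h2 : (Finsupp.single a e + d').subtypeDomain (· ≠ a) = d'.subtypeDomain (· ≠ a) := by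
        ext j
        simp only [Finsupp.subtypeDomain_apply, Finsupp.add_apply, Finsupp.single_apply]
        rw [if_neg (fun h => absurd h.symm j.2)]
        simp
      have h4 : d' a = 0 := Finsupp.notMem_support_iff.mp ha'
      have h3 : (Finsupp.single a e + d') a = e := by simp [h4]
      rw [h2, h3, h4]
      ring
    · rw [dif_neg h, ← Polynomial.C_pow, ← mul_assoc, ← Polynomial.C_mul]
      have h2 : (Finsupp.single a e + d').subtypeDomain (· ≠ k) =
          Finsupp.single (⟨a, h⟩ : {j : Fin n // j ≠ k}) e + d'.subtypeDomain (· ≠ k) := by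
        ext j
        simp [Finsupp.subtypeDomain_apply, Finsupp.single_apply, Subtype.ext_iff]
      have h3 : (Finsupp.single a e + d') k = d' k := by
        simp [Finsupp.single_apply, h]
      rw [h2, h3]
      congr 2
      rw [MvPolynomial.X_pow_eq_monomial, MvPolynomial.monomial_mul, one_mul]

lemma weight_sub (k : Fin n) (d : Fin n →₀ ℕ) :
    Finsupp.weight (wg' n k) (d.subtypeDomain (· ≠ k)) =
      Finsupp.weight (wg n) d - (d k : ℤ) * (((k : ℕ) : ℤ) + 1) := by
  rw [Finsupp.weight_apply, Finsupp.weight_apply,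
    Finsupp.sum_fintype _ _ (fun i => by simp), Finsupp.sum_fintype _ _ (fun i => by simp)]
  have h1 : ∀ b : {j : Fin n // j ≠ k},
      (d.subtypeDomain (· ≠ k)) b • wg' n k b = d (b : Fin n) • wg n (b : Fin n) := by
    intro b
    simp [Finsupp.subtypeDomain_apply, wg, wg']
  rw [Finset.sum_congr rfl (fun b _ => h1 b),
    ← Finset.sum_subtype (Finset.univ.erase k) (by simp) (fun j => d j • wg n j),
    ← Finset.sum_erase_add Finset.univ _ (Finset.mem_univ k)]
  simp only [wg, nsmul_eq_mul]
  ring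

lemma coeff_polyInK_hom (k : Fin n) (q : MvPolynomial (Fin n) ℂ) (W : ℤ)
    (hq : q.IsWeightedHomogeneous (wg n) W) (t : ℕ) :
    ((polyInK k q).coeff t).IsWeightedHomogeneous (wg' n k) (W - (((k : ℕ) : ℤ) + 1) * t) := by
  rw [polyInK_eq,
    show polyInKHom k q =
        polyInKHom k (∑ v ∈ q.support, MvPolynomial.monomial v (MvPolynomial.coeff v q)) from by
      rw [← q.as_sum],
    map_sum, Polynomial.finset_sum_coeff]
  apply MvPolynomial.IsWeightedHomogeneous.sum
  intro d hd
  rw [polyInKHom_monomial, Polynomial.coeff_C_mul, Polynomial.coeff_X_pow, mul_ite, mul_one,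
    mul_zero]
  split_ifs with h
  · apply isWeightedHomogeneous_monomial
    rw [weight_sub, hq (MvPolynomial.mem_support_iff.mp hd), h]
    ring
  · exact isWeightedHomogeneous_zero ℂ (wg' n k) _

lemma toSub_eq (k : Fin n) (q : MvPolynomial (Fin n) ℂ) :
    toSub k q = (polyInK k q).coeff 0 := by
  rw [polyInK_eq]
  have h : (toSub k).toRingHom =
      (Polynomial.constantCoeff).comp (polyInKHom k).toRingHom := by
    apply MvPolynomial.ringHom_ext
    · intro c
      simp [toSub, polyInKHom_C, Polynomial.constantCoeff_apply, Polynomial.coeff_C]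
    · intro j
      by_cases h : j = k
      · subst h
        simp [toSub, polyInKHom_X, Polynomial.constantCoeff_apply]
      · simp [toSub, polyInKHom_X, h, Polynomial.constantCoeff_apply, Polynomial.coeff_C]
  have h2 := RingHom.congr_fun h q
  simpa [Polynomial.constantCoeff_apply] using h2

lemma toSub_hom (k : Fin n) (q : MvPolynomial (Fin n) ℂ) (W : ℤ)
    (hq : q.IsWeightedHomogeneous (wg n) W) :
    ((toSub k) q).IsWeightedHomogeneous (wg' n k) W := by
  rw [toSub_eq]
  simpa using coeff_polyInK_hom k q W hq 0

lemma hom_nat_sum {k : Fin n} {p : MvPolynomial {j : Fin n // j ≠ k} ℂ} {W : ℤ} {Wn : ℕ}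
    (hp : p.IsWeightedHomogeneous (wg' n k) W) (hW : (Wn : ℤ) = W)
    (d : {j : Fin n // j ≠ k} →₀ ℕ) (hd : MvPolynomial.coeff d p ≠ 0) :
    ∑ j : {j : Fin n // j ≠ k}, (((j : Fin n) : ℕ) + 1) * d j = Wn := by
  have h := hp hd
  rw [Finsupp.weight_apply, Finsupp.sum_fintype _ _ (fun i => by simp)] at h
  have hc : ((∑ j : {j : Fin n // j ≠ k}, (((j : Fin n) : ℕ) + 1) * d j : ℕ) : ℤ) = W := by
    push_cast
    rw [← h]
    apply Finset.sum_congr rfl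
    intro j _
    simp only [wg', nsmul_eq_mul]
    ring
  exact_mod_cast hc.trans hW.symm

end St18

/-- For `m = n-2`: (i) `D̃_{n-2,1}` is quasi-homogeneous of weight
`n(3n-2)`; (ii) `D̃_{n-2,2}` is quasi-homogeneous of weight `2n(n-1)`; (iii) for `k = 1, 2`,
`B_{n-2,k} = Res(P_{n-2,k}, P_{n-2,k}')` is quasi-homogeneous of weight `n(n-1)`. -/
theorem statement18 (n : ℕ) (hn : 4 ≤ n)
    (b : ℕ → ℂ) (hb0 : ∀ j ≤ 2, b j ≠ 0)
    (hbinj : ∀ i ≤ 2, ∀ j ≤ 2, b i = b j → i = j)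
    (k1 k2 : Fin n) (hk1 : (k1 : ℕ) = 0) (hk2 : (k2 : ℕ) = 1) :
    (∀ d : {j : Fin n // j ≠ k1} →₀ ℕ,
      MvPolynomial.coeff d (DtildeK n (n - 2) b k1 n) ≠ 0 →
        ∑ j : {j : Fin n // j ≠ k1}, (((j : Fin n) : ℕ) + 1) * d j = n * (3 * n - 2)) ∧
    (∀ d : {j : Fin n // j ≠ k2} →₀ ℕ,
      MvPolynomial.coeff d (DtildeK n (n - 2) b k2 n) ≠ 0 →
        ∑ j : {j : Fin n // j ≠ k2}, (((j : Fin n) : ℕ) + 1) * d j = 2 * n * (n - 1)) ∧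
    (∀ k : ℕ, k = 1 ∨ k = 2 → ∀ kk : Fin n, (kk : ℕ) = k - 1 →
      ∀ d : {j : Fin n // j ≠ kk} →₀ ℕ,
        MvPolynomial.coeff d (toSub kk
          (res (Pmk n (n - 2) b k) (Polynomial.derivative (Pmk n (n - 2) b k)) n (n - 1))) ≠ 0 →
          ∑ j : {j : Fin n // j ≠ kk}, (((j : Fin n) : ℕ) + 1) * d j = n * (n - 1)) := by
  have hD := St18.Dtilde_hom n hn b
  refine ⟨?_, ?_, ?_⟩
  · intro d hd
    have hres := St18.res_hom (St18.wg' n k1) (polyInK k1 (Dtilde n (n - 2) b))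
      (2 * (n : ℤ)) (((k1 : ℕ) : ℤ) + 1) n (by omega)
      (fun e => St18.coeff_polyInK_hom k1 _ _ hD e)
    have hDK : (DtildeK n (n - 2) b k1 n).IsWeightedHomogeneous (St18.wg' n k1)
        (((n : ℤ) - 1) * (2 * (n : ℤ) - (((k1 : ℕ) : ℤ) + 1) * n) +
          n * (2 * (n : ℤ) - (((k1 : ℕ) : ℤ) + 1))) := by
      unfold DtildeK
      exact hres
    refine St18.hom_nat_sum hDK ?_ d hd
    rw [hk1]
    have h1 : ((n * (3 * n - 2) : ℕ) : ℤ) = (n : ℤ) * (3 * (n : ℤ) - 2) := by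
      have h2 : (2 : ℕ) ≤ 3 * n := by omega
      push_cast [Nat.cast_sub h2]
      ring
    rw [h1]
    push_cast
    ring
  · intro d hd
    have hres := St18.res_hom (St18.wg' n k2) (polyInK k2 (Dtilde n (n - 2) b))
      (2 * (n : ℤ)) (((k2 : ℕ) : ℤ) + 1) n (by omega)
      (fun e => St18.coeff_polyInK_hom k2 _ _ hD e)
    have hDK : (DtildeK n (n - 2) b k2 n).IsWeightedHomogeneous (St18.wg' n k2)
        (((n : ℤ) - 1) * (2 * (n : ℤ) - (((k2 : ℕ) : ℤ) + 1) * n) +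
          n * (2 * (n : ℤ) - (((k2 : ℕ) : ℤ) + 1))) := by
      unfold DtildeK
      exact hres
    refine St18.hom_nat_sum hDK ?_ d hd
    rw [hk2]
    have h1 : ((2 * n * (n - 1) : ℕ) : ℤ) = 2 * (n : ℤ) * ((n : ℤ) - 1) := by
      have h2 : (1 : ℕ) ≤ n := by omega
      push_cast [Nat.cast_sub h2]
      ring
    rw [h1]
    push_cast
    ring
  · intro k _ kk _ d hd
    have hres := St18.res_hom (St18.wg n) (Pmk n (n - 2) b k) (n : ℤ) 1 n (by omega)
      (fun e => St18.hom_congr (St18.coeff_hom_Pmk n (n - 2) (by omega) b k e) (by ring))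
    have hB := St18.toSub_hom kk _ _ hres
    refine St18.hom_nat_sum hB ?_ d hd
    have h1 : ((n * (n - 1) : ℕ) : ℤ) = (n : ℤ) * ((n : ℤ) - 1) := by
      have h2 : (1 : ℕ) ≤ n := by omega
      push_cast [Nat.cast_sub h2]
      ring
    rw [h1]
    ring
end
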